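/- arXiv:1102.3608 — 2 statements merged into one kernel-verified Lean document; each statement's English description precedes it below -/
import Mathlib

section
/- Let n ≥ 3. For every z = (z₁, …, z_n) ∈ ℂⁿ with z ≠ 0, in the exterior algebra ⋀(ℂ^{2n}) one has ‖z‖² · (α ∧ α) ≠ 2 · (α ∧ β_z ∧ γ_z), where α = Σ_{k=1}^n e_{2k−1} ∧ e_{2k}, β_z = Σ_k conj(z_k)·e_{2k−1}, and γ_z = Σ_k z_k·e_{2k}, with e₁,…,e_{2n} the standard basis of ℂ^{2n}. -/
open ExteriorAlgebra

/-- The standard basis vectors `e₁, …, e_{2n}` of `ℂ^{2n}` viewed inside the exterior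
algebra `⋀(ℂ^{2n})` (0-indexed). Here `e (2k)` represents `dz_{k+1}` and `e (2k+1)`
represents `dz̄_{k+1}`. -/
noncomputable def e (n : ℕ) (i : Fin (2 * n)) : ExteriorAlgebra ℂ (Fin (2 * n) → ℂ) :=
  ExteriorAlgebra.ι ℂ (Pi.single i 1)

namespace HopfAux

variable {n : ℕ}

theorem d0_lt (k : Fin n) : 2 * (k : ℕ) + 0 < 2 * n := by have := k.isLt; omega
theorem d1_lt (k : Fin n) : 2 * (k : ℕ) + 1 + 0 < 2 * n := by have := k.isLt; omega
def d0 (k : Fin n) : Fin (2 * n) := ⟨2 * k, d0_lt k⟩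
def d1 (k : Fin n) : Fin (2 * n) := ⟨2 * k + 1, d1_lt k⟩

def cfun (p q : Fin n) : Fin 4 → Fin (2 * n) := ![d0 p, d1 p, d0 q, d1 q]

/-- The 0/1 matrix whose `(r,s)` entry detects `c s = v r`. -/
def cMat (c v : Fin 4 → Fin (2 * n)) : Matrix (Fin 4) (Fin 4) ℂ :=
  Matrix.of fun r s => if c s = v r then 1 else 0

/-- The degree-4 alternating form extracting the coefficient along `c`. -/
noncomputable def Phi (c : Fin 4 → Fin (2 * n)) :
    (Fin (2 * n) → ℂ) [⋀^Fin 4]→ₗ[ℂ] ℂ :=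
  (Matrix.detRowAlternating).compLinearMap (LinearMap.pi fun s => LinearMap.proj (c s))

noncomputable def fam (c : Fin 4 → Fin (2 * n)) :
    ∀ i : ℕ, (Fin (2 * n) → ℂ) [⋀^Fin i]→ₗ[ℂ] ℂ
  | 4 => Phi c
  | _ => 0

noncomputable def Fmap (c : Fin 4 → Fin (2 * n)) :
    ExteriorAlgebra ℂ (Fin (2 * n) → ℂ) →ₗ[ℂ] ℂ :=
  ExteriorAlgebra.liftAlternating (fam c)

lemma Phi_apply (c : Fin 4 → Fin (2 * n)) (v : Fin 4 → (Fin (2 * n) → ℂ)) :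
    Phi c v = Matrix.det (Matrix.of fun r s => v r (c s)) := rfl

lemma Fmap_quad (c : Fin 4 → Fin (2 * n)) (a b a' b' : Fin (2 * n)) :
    Fmap c (e n a * e n b * (e n a' * e n b')) = (cMat c ![a, b, a', b']).det := by
  have h1 : e n a * e n b * (e n a' * e n b')
      = ExteriorAlgebra.ιMulti ℂ 4
          (fun r => (Pi.single ((![a, b, a', b'] : Fin 4 → Fin (2*n)) r) 1 : Fin (2 * n) → ℂ)) := by
    rw [ExteriorAlgebra.ιMulti_apply]
    simp [e, List.ofFn_succ, mul_assoc]
  have h4 : fam c 4 = Phi c := rfl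
  rw [h1]
  unfold Fmap
  rw [ExteriorAlgebra.liftAlternating_apply_ιMulti, h4, Phi_apply]
  have hm : (Matrix.of fun r s =>
        ((Pi.single ((![a, b, a', b'] : Fin 4 → Fin (2*n)) r) 1 : Fin (2*n) → ℂ) (c s)))
      = cMat c ![a, b, a', b'] := by
    ext r s
    simp [cMat, Pi.single_apply]
  rw [hm]

lemma Fmap_quad' (c : Fin 4 → Fin (2 * n)) (a b a' b' : Fin (2 * n)) :
    Fmap c (e n a * (e n b * (e n a' * e n b'))) = (cMat c ![a, b, a', b']).det := by
  rw [← mul_assoc]; exact Fmap_quad c a b a' b'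

lemma det_row_ne (c v : Fin 4 → Fin (2 * n)) (r : Fin 4) (h : ∀ s, c s ≠ v r) :
    (cMat c v).det = 0 :=
  Matrix.det_eq_zero_of_row_eq_zero r fun s => if_neg (h s)

lemma det_rows_eq (c v : Fin 4 → Fin (2 * n)) {r r' : Fin 4} (hrr : r ≠ r') (h : v r = v r') :
    (cMat c v).det = 0 :=
  Matrix.det_zero_of_row_eq hrr (funext fun s => by simp [cMat, h])

lemma cMat_self (c : Fin 4 → Fin (2 * n)) (hc : Function.Injective c) :
    cMat c c = 1 := by
  ext r s
  by_cases hrs : r = s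
  · subst hrs; simp [cMat]
  · rw [Matrix.one_apply_ne hrs]
    simp only [cMat, Matrix.of_apply]
    exact if_neg fun h => hrs (hc h).symm

lemma det_self (c : Fin 4 → Fin (2 * n)) (hc : Function.Injective c) :
    (cMat c c).det = 1 := by rw [cMat_self c hc, Matrix.det_one]

lemma det_perm (c : Fin 4 → Fin (2 * n)) (hc : Function.Injective c) (σ : Equiv.Perm (Fin 4)) :
    (cMat c (c ∘ σ)).det = (Equiv.Perm.sign σ : ℂ) := by
  have h : cMat c (c ∘ σ) = (cMat c c).submatrix σ id := rfl
  rw [h, Matrix.det_permute, cMat_self c hc, Matrix.det_one, mul_one]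

variable {p q : Fin n}

lemma cfun_inj (hpq : p ≠ q) : Function.Injective (cfun p q) := by
  have hv : (p : ℕ) ≠ (q : ℕ) := fun h => hpq (Fin.ext h)
  intro a b hab
  fin_cases a <;> fin_cases b <;> simp_all [cfun, d0, d1, Fin.ext_iff] <;> omega

lemma row_d0_ne (k : Fin n) (hp : k ≠ p) (hq : k ≠ q) : ∀ s, cfun p q s ≠ d0 k := by
  have h1 : (k : ℕ) ≠ (p : ℕ) := fun h => hp (Fin.ext h)
  have h2 : (k : ℕ) ≠ (q : ℕ) := fun h => hq (Fin.ext h)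
  intro s
  fin_cases s <;> simp [cfun, d0, d1, Fin.ext_iff] <;> omega

lemma row_d1_ne (k : Fin n) (hp : k ≠ p) (hq : k ≠ q) : ∀ s, cfun p q s ≠ d1 k := by
  have h1 : (k : ℕ) ≠ (p : ℕ) := fun h => hp (Fin.ext h)
  have h2 : (k : ℕ) ≠ (q : ℕ) := fun h => hq (Fin.ext h)
  intro s
  fin_cases s <;> simp [cfun, d0, d1, Fin.ext_iff] <;> omega

/-- the double-swap permutation -/
def σ2 : Equiv.Perm (Fin 4) := Equiv.swap 0 2 * Equiv.swap 1 3

lemma cfun_swap : (![d0 q, d1 q, d0 p, d1 p] : Fin 4 → Fin (2*n)) = cfun p q ∘ σ2 := by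
  funext r
  fin_cases r <;> rfl

lemma det_swap (hpq : p ≠ q) :
    (cMat (cfun p q) ![d0 q, d1 q, d0 p, d1 p]).det = 1 := by
  rw [cfun_swap, det_perm _ (cfun_inj hpq)]
  have h : Equiv.Perm.sign σ2 = 1 := by decide
  rw [h]
  norm_num

lemma det_rows_eq02 (c : Fin 4 → Fin (2 * n)) (x y w : Fin (2 * n)) :
    (cMat c ![x, y, x, w]).det = 0 :=
  det_rows_eq c ![x, y, x, w] (show (0:Fin 4) ≠ 2 by decide) rfl

lemma det_rows_eq13 (c : Fin 4 → Fin (2 * n)) (x y w : Fin (2 * n)) :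
    (cMat c ![x, y, w, y]).det = 0 :=
  det_rows_eq c ![x, y, w, y] (show (1:Fin 4) ≠ 3 by decide) rfl

lemma claimL (hpq : p ≠ q) (i k : Fin n) :
    (cMat (cfun p q) ![d0 i, d1 i, d0 k, d1 k]).det
      = (if i = p then (1:ℂ) else 0) * (if k = q then 1 else 0)
        + (if i = q then (1:ℂ) else 0) * (if k = p then 1 else 0) := by
  by_cases hip : i = p
  · subst hip
    by_cases hkq : k = q
    · subst hkq
      rw [show (![d0 i, d1 i, d0 k, d1 k] : Fin 4 → Fin (2*n)) = cfun i k from rfl,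
        det_self _ (cfun_inj hpq)]
      simp [hpq, Ne.symm hpq]
    · by_cases hkp : k = i
      · subst hkp
        rw [det_rows_eq02]
        simp [hpq, hkq]
      · rw [det_row_ne _ _ 2 (row_d0_ne k (fun h => hkp h) hkq)]
        simp [hkq, fun h => hkp h, Ne.symm hpq]
  · by_cases hiq : i = q
    · subst hiq
      by_cases hkp : k = p
      · subst hkp
        rw [det_swap hpq]
        simp [Ne.symm hpq, hip]
      · by_cases hkq : k = i
        · subst hkq
          rw [det_rows_eq02]
          simp [hip, hkp]
        · rw [det_row_ne _ _ 2 (row_d0_ne k hkp (fun h => hkq h))]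
          simp [hip, hkp]
    · rw [det_row_ne _ _ 0 (row_d0_ne i hip hiq)]
      simp [hip, hiq]

lemma claimR (hpq : p ≠ q) (i l m : Fin n) :
    (cMat (cfun p q) ![d0 i, d1 i, d0 l, d1 m]).det
      = (if i = p then (1:ℂ) else 0) * (if l = q then 1 else 0) * (if m = q then 1 else 0)
        + (if i = q then (1:ℂ) else 0) * (if l = p then 1 else 0) * (if m = p then 1 else 0) := by
  by_cases hip : i = p
  · subst hip
    by_cases hlq : l = q
    · subst hlq
      by_cases hmq : m = l
      · subst hmq
        rw [show (![d0 i, d1 i, d0 m, d1 m] : Fin 4 → Fin (2*n)) = cfun i m from rfl,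
          det_self _ (cfun_inj hpq)]
        simp [hpq, Ne.symm hpq]
      · by_cases hmp : m = i
        · subst hmp
          rw [det_rows_eq13]
          simp [hpq, fun h => hmq h]
        · rw [det_row_ne _ _ 3 (row_d1_ne m (fun h => hmp h) (fun h => hmq h))]
          simp [fun h => hmq h, fun h => hmp h, Ne.symm hpq]
    · by_cases hlp : l = i
      · subst hlp
        rw [det_rows_eq02]
        simp [hpq, hlq]
      · rw [det_row_ne _ _ 2 (row_d0_ne l (fun h => hlp h) hlq)]
        simp [hlq, fun h => hlp h, Ne.symm hpq]
  · by_cases hiq : i = q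
    · subst hiq
      by_cases hlp : l = p
      · subst hlp
        by_cases hmp : m = l
        · subst hmp
          rw [det_swap hpq]
          simp [Ne.symm hpq, hip]
        · by_cases hmq : m = i
          · subst hmq
            rw [det_rows_eq13]
            simp [hip, fun h => hmp h]
          · rw [det_row_ne _ _ 3 (row_d1_ne m (fun h => hmp h) (fun h => hmq h))]
            simp [hip, fun h => hmp h, fun h => hmq h]
      · by_cases hlq : l = i
        · subst hlq
          rw [det_rows_eq02]
          simp [hip, hlp]
        · rw [det_row_ne _ _ 2 (row_d0_ne l hlp (fun h => hlq h))]
          simp [hip, hlp]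
    · rw [det_row_ne _ _ 0 (row_d0_ne i hip hiq)]
      simp [hip, hiq]

lemma claimL' (hpq : p ≠ q) (i k : Fin n) (h1 : 2 * (i:ℕ) < 2*n) (h2 : 2 * (i:ℕ) + 1 < 2*n)
    (h3 : 2 * (k:ℕ) < 2*n) (h4 : 2 * (k:ℕ) + 1 < 2*n) :
    (cMat (cfun p q) ![⟨2*(i:ℕ), h1⟩, ⟨2*(i:ℕ)+1, h2⟩, ⟨2*(k:ℕ), h3⟩, ⟨2*(k:ℕ)+1, h4⟩]).det
      = (if i = p then (1:ℂ) else 0) * (if k = q then 1 else 0)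
        + (if i = q then (1:ℂ) else 0) * (if k = p then 1 else 0) :=
  claimL hpq i k

lemma claimR' (hpq : p ≠ q) (i l m : Fin n) (h1 : 2 * (i:ℕ) < 2*n) (h2 : 2 * (i:ℕ) + 1 < 2*n)
    (h3 : 2 * (l:ℕ) < 2*n) (h4 : 2 * (m:ℕ) + 1 < 2*n) :
    (cMat (cfun p q) ![⟨2*(i:ℕ), h1⟩, ⟨2*(i:ℕ)+1, h2⟩, ⟨2*(l:ℕ), h3⟩, ⟨2*(m:ℕ)+1, h4⟩]).det
      = (if i = p then (1:ℂ) else 0) * (if l = q then 1 else 0) * (if m = q then 1 else 0)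
        + (if i = q then (1:ℂ) else 0) * (if l = p then 1 else 0) * (if m = p then 1 else 0) :=
  claimR hpq i l m

lemma Fmap_quad'' (c : Fin 4 → Fin (2 * n)) (a b a' b' : Fin (2 * n)) :
    Fmap c (e n a * e n b * e n a' * e n b') = (cMat c ![a, b, a', b']).det := by
  rw [mul_assoc (e n a * e n b)]; exact Fmap_quad c a b a' b'

end HopfAux

open HopfAux

/-- For `n ≥ 3` and every `z ∈ ℂⁿ` with `z ≠ 0`, in `⋀(ℂ^{2n})` one has
`‖z‖² · (α ∧ α) ≠ 2 · (α ∧ β_z ∧ γ_z)`, where `α = Σ_k e_{2k−1} ∧ e_{2k}`,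
`β_z = Σ_k conj(z_k) · e_{2k−1}` and `γ_z = Σ_k z_k · e_{2k}`.
(This is the algebraic content of Lemma 3: the standard metric form on a Hopf
manifold of dimension `≥ 3` is not pluriclosed.) -/
theorem hopf_not_pluriclosed (n : ℕ) (hn : 3 ≤ n) (z : Fin n → ℂ) (hz : z ≠ 0) :
    ((∑ k : Fin n, ‖z k‖ ^ 2 : ℝ) : ℂ) •
        ((∑ k : Fin n, e n ⟨2 * k, by have := k.isLt; omega⟩
            * e n ⟨2 * k + 1, by have := k.isLt; omega⟩) *
         (∑ k : Fin n, e n ⟨2 * k, by have := k.isLt; omega⟩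
            * e n ⟨2 * k + 1, by have := k.isLt; omega⟩))
      ≠ (2 : ℂ) •
        ((∑ k : Fin n, e n ⟨2 * k, by have := k.isLt; omega⟩
            * e n ⟨2 * k + 1, by have := k.isLt; omega⟩)
          * (∑ k : Fin n, (starRingEnd ℂ (z k)) • e n ⟨2 * k, by have := k.isLt; omega⟩)
          * (∑ k : Fin n, (z k) • e n ⟨2 * k + 1, by have := k.isLt; omega⟩)) := by
  intro heq
  obtain ⟨j, hj⟩ := Function.ne_iff.mp hz
  simp only [Pi.zero_apply] at hj
  obtain ⟨p, q, hpq, hpj, hqj⟩ : ∃ p q : Fin n, p ≠ q ∧ p ≠ j ∧ q ≠ j := by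
    by_cases h0 : (j : ℕ) = 0
    · refine ⟨⟨1, by omega⟩, ⟨2, by omega⟩, ?_, ?_, ?_⟩ <;> simp [Fin.ext_iff] <;> omega
    · by_cases h1 : (j : ℕ) = 1
      · refine ⟨⟨0, by omega⟩, ⟨2, by omega⟩, ?_, ?_, ?_⟩ <;> simp [Fin.ext_iff] <;> omega
      · refine ⟨⟨0, by omega⟩, ⟨1, by omega⟩, ?_, ?_, ?_⟩ <;> simp [Fin.ext_iff] <;> omega
  have H := congrArg (Fmap (cfun p q)) heq
  simp only [map_smul, Finset.sum_mul, Finset.mul_sum, mul_smul_comm, smul_mul_assoc,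
    map_sum, Fmap_quad, Fmap_quad'', smul_eq_mul] at H
  simp only [claimL' hpq, claimR' hpq] at H
  simp only [mul_add, add_mul, mul_ite, ite_mul, mul_zero, zero_mul, mul_one, one_mul,
    Finset.sum_add_distrib, Finset.sum_ite_eq', Finset.sum_ite_irrel, Finset.sum_const_zero, Finset.mem_univ, if_true] at H
  rw [Complex.mul_conj, Complex.mul_conj] at H
  have h2 : ((∑ k : Fin n, ‖z k‖ ^ 2 : ℝ) : ℂ)
      = ((Complex.normSq (z q) + Complex.normSq (z p) : ℝ) : ℂ) := by
    push_cast at H ⊢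
    linear_combination H / 2
  have hS := Complex.ofReal_inj.mp h2
  rw [Complex.normSq_eq_norm_sq, Complex.normSq_eq_norm_sq] at hS
  have hj' : 0 < ‖z j‖ ^ 2 := pow_pos (norm_pos_iff.mpr hj) 2
  have hsub : ∑ k ∈ ({p, q, j} : Finset (Fin n)), ‖z k‖ ^ 2 ≤ ∑ k : Fin n, ‖z k‖ ^ 2 :=
    Finset.sum_le_sum_of_subset_of_nonneg (Finset.subset_univ _) (fun i _ _ => by positivity)
  rw [Finset.sum_insert (by simp [hpq, hpj]), Finset.sum_insert (by simp [hqj]),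
    Finset.sum_singleton] at hsub
  linarith
end

section
/- Let 0 < r < 1 and let t11, t12, t21, t22 : ℂ² → ℂ be twice continuously differentiable on an open neighborhood of the closed set cl(𝔻) × cl(D(0,r)) (where 𝔻 is the open unit disc in ℂ), satisfying the identity ∂²t22/∂z₁∂z̄₁ + ∂²t11/∂z₂∂z̄₂ − ∂²t12/∂z₂∂z̄₁ − ∂²t21/∂z₁∂z̄₂ = 0 on that neighborhood, where ∂/∂z_j and ∂/∂z̄_j denote Wirtinger derivatives. Define a : 𝔻 → ℂ by a(z₁) = ∫_{D(0,r)} t22(z₁, w) dλ(w), with λ the Lebesgue measure on ℂ. Then a is twice continuously differentiable on 𝔻 and for every z₁ ∈ 𝔻: ∂²a/∂z₁∂z̄₁ (z₁) = (i/2)·[ ∮_{|w|=r} (∂t12/∂z̄₁)(z₁, w) dw̄ − ∮_{|w|=r} (∂t21/∂z₁)(z₁, w) dw + ∮_{|w|=r} (∂t11/∂w)(z₁, w) dw ], where for a continuous function g on the circle |w| = r the contour integrals are ∮_{|w|=r} g(w) dw := ∫₀^{2π} g(r e^{iθ}) · i r e^{iθ} dθ and ∮_{|w|=r} g(w) dw̄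 := ∫₀^{2π} g(r e^{iθ}) · (−i) r e^{−iθ} dθ. -/
open MeasureTheory Complex

/-- Wirtinger derivative `∂f/∂z` of a function of one complex variable:
`(1/2)(∂f/∂x − i ∂f/∂y)`, expressed via real directional derivatives. -/
noncomputable def wirtD (f : ℂ → ℂ) (p : ℂ) : ℂ :=
  (1 / 2) * (lineDeriv ℝ f p 1 - Complex.I * lineDeriv ℝ f p Complex.I)

/-- Conjugate Wirtinger derivative `∂f/∂z̄` of a function of one complex variable:
`(1/2)(∂f/∂x + i ∂f/∂y)`. -/
noncomputable def wirtDBar (f : ℂ → ℂ) (p : ℂ) : ℂ :=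
  (1 / 2) * (lineDeriv ℝ f p 1 + Complex.I * lineDeriv ℝ f p Complex.I)

/-- Wirtinger derivative `∂f/∂z₁` in the first variable. -/
noncomputable def wirtD1 (f : ℂ × ℂ → ℂ) (p : ℂ × ℂ) : ℂ :=
  wirtD (fun w => f (w, p.2)) p.1

/-- Conjugate Wirtinger derivative `∂f/∂z̄₁` in the first variable. -/
noncomputable def wirtDBar1 (f : ℂ × ℂ → ℂ) (p : ℂ × ℂ) : ℂ :=
  wirtDBar (fun w => f (w, p.2)) p.1

/-- Wirtinger derivative `∂f/∂z₂` in the second variable. -/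
noncomputable def wirtD2 (f : ℂ × ℂ → ℂ) (p : ℂ × ℂ) : ℂ :=
  wirtD (fun w => f (p.1, w)) p.2

/-- Conjugate Wirtinger derivative `∂f/∂z̄₂` in the second variable. -/
noncomputable def wirtDBar2 (f : ℂ × ℂ → ℂ) (p : ℂ × ℂ) : ℂ :=
  wirtDBar (fun w => f (p.1, w)) p.2

/-- Contour integral `∮_{|w|=r} g(w) dw = ∫₀^{2π} g(r e^{iθ}) · i r e^{iθ} dθ`. -/
noncomputable def contourDw (r : ℝ) (g : ℂ → ℂ) : ℂ :=
  ∫ θ in (0:ℝ)..(2 * Real.pi),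
    g (r * Complex.exp (Complex.I * θ)) * (Complex.I * r * Complex.exp (Complex.I * θ))

/-- Contour integral `∮_{|w|=r} g(w) dw̄ = ∫₀^{2π} g(r e^{iθ}) · (−i) r e^{−iθ} dθ`. -/
noncomputable def contourDwBar (r : ℝ) (g : ℂ → ℂ) : ℂ :=
  ∫ θ in (0:ℝ)..(2 * Real.pi),
    g (r * Complex.exp (Complex.I * θ)) * (-Complex.I * r * Complex.exp (-(Complex.I * θ)))

open Metric Set
open scoped Real

section Aux








lemma lineDeriv_congr_nhds {f g : ℂ → ℂ} {x : ℂ} (h : f =ᶠ[nhds x] g) (v : ℂ) :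
    lineDeriv ℝ f x v = lineDeriv ℝ g x v := by
  have ht : Filter.Tendsto (fun t : ℝ => x + t • v) (nhds 0) (nhds x) := by
    have : Continuous (fun t : ℝ => x + t • v) := by continuity
    simpa using this.tendsto 0
  have := (h.comp_tendsto ht).deriv_eq
  simpa [lineDeriv, Function.comp_def] using this

lemma wirtD_congr_nhds {f g : ℂ → ℂ} {x : ℂ} (h : f =ᶠ[nhds x] g) :
    wirtD f x = wirtD g x := by
  simp [wirtD, lineDeriv_congr_nhds h]

lemma wirtDBar_congr_nhds {f g : ℂ → ℂ} {x : ℂ} (h : f =ᶠ[nhds x] g) :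
    wirtDBar f x = wirtDBar g x := by
  simp [wirtDBar, lineDeriv_congr_nhds h]

lemma wirtD_of_hasFDerivAt {f : ℂ → ℂ} {L : ℂ →L[ℝ] ℂ} {x : ℂ} (h : HasFDerivAt f L x) :
    wirtD f x = (1 / 2) * (L 1 - Complex.I * L Complex.I) := by
  rw [wirtD, (h.hasLineDerivAt 1).lineDeriv, (h.hasLineDerivAt Complex.I).lineDeriv]

lemma wirtDBar_of_hasFDerivAt {f : ℂ → ℂ} {L : ℂ →L[ℝ] ℂ} {x : ℂ} (h : HasFDerivAt f L x) :
    wirtDBar f x = (1 / 2) * (L 1 + Complex.I * L Complex.I) := by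
  rw [wirtDBar, (h.hasLineDerivAt 1).lineDeriv, (h.hasLineDerivAt Complex.I).lineDeriv]

lemma slice1_hasFDerivAt {F : ℂ × ℂ → ℂ} {p : ℂ × ℂ} {L : ℂ × ℂ →L[ℝ] ℂ}
    (h : HasFDerivAt F L p) :
    HasFDerivAt (fun z => F (z, p.2)) (L.comp (ContinuousLinearMap.inl ℝ ℂ ℂ)) p.1 := by
  exact h.comp p.1 (hasFDerivAt_prodMk_left p.1 p.2)

lemma slice2_hasFDerivAt {F : ℂ × ℂ → ℂ} {p : ℂ × ℂ} {L : ℂ × ℂ →L[ℝ] ℂ}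
    (h : HasFDerivAt F L p) :
    HasFDerivAt (fun w => F (p.1, w)) (L.comp (ContinuousLinearMap.inr ℝ ℂ ℂ)) p.2 := by
  exact h.comp p.2 (hasFDerivAt_prodMk_right p.1 p.2)

lemma wirtD1_of_hasFDerivAt {F : ℂ × ℂ → ℂ} {p : ℂ × ℂ} {L : ℂ × ℂ →L[ℝ] ℂ}
    (h : HasFDerivAt F L p) :
    wirtD1 F p = (1 / 2) * (L (1, 0) - Complex.I * L (Complex.I, 0)) := by
  have := wirtD_of_hasFDerivAt (slice1_hasFDerivAt h)
  simpa [wirtD1] using this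

lemma wirtDBar1_of_hasFDerivAt {F : ℂ × ℂ → ℂ} {p : ℂ × ℂ} {L : ℂ × ℂ →L[ℝ] ℂ}
    (h : HasFDerivAt F L p) :
    wirtDBar1 F p = (1 / 2) * (L (1, 0) + Complex.I * L (Complex.I, 0)) := by
  have := wirtDBar_of_hasFDerivAt (slice1_hasFDerivAt h)
  simpa [wirtDBar1] using this

lemma wirtD2_of_hasFDerivAt {F : ℂ × ℂ → ℂ} {p : ℂ × ℂ} {L : ℂ × ℂ →L[ℝ] ℂ}
    (h : HasFDerivAt F L p) :
    wirtD2 F p = (1 / 2) * (L (0, 1) - Complex.I * L (0, Complex.I)) := by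
  have := wirtD_of_hasFDerivAt (slice2_hasFDerivAt h)
  simpa [wirtD2] using this

lemma wirtDBar2_of_hasFDerivAt {F : ℂ × ℂ → ℂ} {p : ℂ × ℂ} {L : ℂ × ℂ →L[ℝ] ℂ}
    (h : HasFDerivAt F L p) :
    wirtDBar2 F p = (1 / 2) * (L (0, 1) + Complex.I * L (0, Complex.I)) := by
  have := wirtDBar_of_hasFDerivAt (slice2_hasFDerivAt h)
  simpa [wirtDBar2] using this

/-- generic first-order combination of partial derivatives -/
noncomputable def phi (t : ℂ × ℂ → ℂ) (a b : ℂ × ℂ) (ε : ℂ) (q : ℂ × ℂ) : ℂ :=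
  (1 / 2) * (fderiv ℝ t q a + ε * fderiv ℝ t q b)

section
variable {U : Set (ℂ × ℂ)} {t : ℂ × ℂ → ℂ} {q : ℂ × ℂ}

lemma diffAt_of_contDiffOn (hU : IsOpen U) (ht : ContDiffOn ℝ 1 t U) (hq : q ∈ U) :
    DifferentiableAt ℝ t q :=
  (ht.differentiableOn one_ne_zero).differentiableAt (hU.mem_nhds hq)

lemma wirtDBar1_eq_phi (hU : IsOpen U) (ht : ContDiffOn ℝ 1 t U) (hq : q ∈ U) :
    wirtDBar1 t q = phi t (1, 0) (Complex.I, 0) Complex.I q :=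
  wirtDBar1_of_hasFDerivAt (diffAt_of_contDiffOn hU ht hq).hasFDerivAt

lemma wirtD1_eq_phi (hU : IsOpen U) (ht : ContDiffOn ℝ 1 t U) (hq : q ∈ U) :
    wirtD1 t q = phi t (1, 0) (Complex.I, 0) (-Complex.I) q := by
  have := wirtD1_of_hasFDerivAt (F := t) (diffAt_of_contDiffOn hU ht hq).hasFDerivAt
  rw [this, phi]; ring

lemma wirtD2_eq_phi (hU : IsOpen U) (ht : ContDiffOn ℝ 1 t U) (hq : q ∈ U) :
    wirtD2 t q = phi t (0, 1) (0, Complex.I) (-Complex.I) q := by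
  have := wirtD2_of_hasFDerivAt (F := t) (diffAt_of_contDiffOn hU ht hq).hasFDerivAt
  rw [this, phi]; ring

lemma wirtDBar2_eq_phi (hU : IsOpen U) (ht : ContDiffOn ℝ 1 t U) (hq : q ∈ U) :
    wirtDBar2 t q = phi t (0, 1) (0, Complex.I) Complex.I q :=
  wirtDBar2_of_hasFDerivAt (diffAt_of_contDiffOn hU ht hq).hasFDerivAt

lemma phi_contDiffOn (hU : IsOpen U) (ht : ContDiffOn ℝ 2 t U) (a b : ℂ × ℂ) (ε : ℂ) :
    ContDiffOn ℝ 1 (phi t a b ε) U := by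
  have hf : ContDiffOn ℝ 1 (fderiv ℝ t) U := ht.fderiv_of_isOpen hU (by norm_num)
  exact (contDiffOn_const.mul ((hf.clm_apply contDiffOn_const).add
    (contDiffOn_const.mul (hf.clm_apply contDiffOn_const))))

lemma phi_hasFDerivAt (hU : IsOpen U) (ht : ContDiffOn ℝ 2 t U) (hq : q ∈ U) (a b : ℂ × ℂ)
    (ε : ℂ) :
    HasFDerivAt (phi t a b ε)
      ((1 / 2 : ℂ) • (((ContinuousLinearMap.apply ℝ ℂ a).comp
          (fderiv ℝ (fderiv ℝ t) q)) + ε • ((ContinuousLinearMap.apply ℝ ℂ b).comp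
          (fderiv ℝ (fderiv ℝ t) q)))) q := by
  have hf : ContDiffOn ℝ 1 (fderiv ℝ t) U := ht.fderiv_of_isOpen hU (by norm_num)
  have hH : HasFDerivAt (fderiv ℝ t) (fderiv ℝ (fderiv ℝ t) q) q :=
    ((hf.differentiableOn one_ne_zero).differentiableAt (hU.mem_nhds hq)).hasFDerivAt
  have h1 : HasFDerivAt (fun q' => fderiv ℝ t q' a)
      ((ContinuousLinearMap.apply ℝ ℂ a).comp (fderiv ℝ (fderiv ℝ t) q)) q :=
    (ContinuousLinearMap.apply ℝ ℂ a).hasFDerivAt.comp q hH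
  have h2 : HasFDerivAt (fun q' => fderiv ℝ t q' b)
      ((ContinuousLinearMap.apply ℝ ℂ b).comp (fderiv ℝ (fderiv ℝ t) q)) q :=
    (ContinuousLinearMap.apply ℝ ℂ b).hasFDerivAt.comp q hH
  exact ((h1.add (h2.const_mul ε)).const_mul (1 / 2 : ℂ))


lemma wirtD1_congr_on {F G : ℂ × ℂ → ℂ} (hU : IsOpen U) (h : ∀ p ∈ U, F p = G p) (hq : q ∈ U) :
    wirtD1 F q = wirtD1 G q := by
  apply wirtD_congr_nhds
  have hop : IsOpen {z : ℂ | (z, q.2) ∈ U} := hU.preimage (by fun_prop)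
  filter_upwards [hop.mem_nhds hq] with z hz using h _ hz

lemma wirtD2_congr_on {F G : ℂ × ℂ → ℂ} (hU : IsOpen U) (h : ∀ p ∈ U, F p = G p) (hq : q ∈ U) :
    wirtD2 F q = wirtD2 G q := by
  apply wirtD_congr_nhds
  have hop : IsOpen {w : ℂ | (q.1, w) ∈ U} := hU.preimage (by fun_prop)
  filter_upwards [hop.mem_nhds hq] with w hw using h _ hw

lemma wirtDBar2_congr_on {F G : ℂ × ℂ → ℂ} (hU : IsOpen U) (h : ∀ p ∈ U, F p = G p)
    (hq : q ∈ U) : wirtDBar2 F q = wirtDBar2 G q := by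
  apply wirtDBar_congr_nhds
  have hop : IsOpen {w : ℂ | (q.1, w) ∈ U} := hU.preimage (by fun_prop)
  filter_upwards [hop.mem_nhds hq] with w hw using h _ hw

lemma wirtD1_phi (hU : IsOpen U) (ht : ContDiffOn ℝ 2 t U) (hq : q ∈ U) (a b : ℂ × ℂ) (ε : ℂ) :
    wirtD1 (phi t a b ε) q
      = (1 / 2) * ((1 / 2) * (fderiv ℝ (fderiv ℝ t) q (1, 0) a
            + ε * fderiv ℝ (fderiv ℝ t) q (1, 0) b)
          - Complex.I * ((1 / 2) * (fderiv ℝ (fderiv ℝ t) q (Complex.I, 0) a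
            + ε * fderiv ℝ (fderiv ℝ t) q (Complex.I, 0) b))) := by
  rw [wirtD1_of_hasFDerivAt (phi_hasFDerivAt hU ht hq a b ε)]
  simp [smul_eq_mul]
  ring

lemma wirtD2_phi (hU : IsOpen U) (ht : ContDiffOn ℝ 2 t U) (hq : q ∈ U) (a b : ℂ × ℂ) (ε : ℂ) :
    wirtD2 (phi t a b ε) q
      = (1 / 2) * ((1 / 2) * (fderiv ℝ (fderiv ℝ t) q (0, 1) a
            + ε * fderiv ℝ (fderiv ℝ t) q (0, 1) b)
          - Complex.I * ((1 / 2) * (fderiv ℝ (fderiv ℝ t) q (0, Complex.I) a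
            + ε * fderiv ℝ (fderiv ℝ t) q (0, Complex.I) b))) := by
  rw [wirtD2_of_hasFDerivAt (phi_hasFDerivAt hU ht hq a b ε)]
  simp [smul_eq_mul]
  ring

lemma wirtDBar2_phi (hU : IsOpen U) (ht : ContDiffOn ℝ 2 t U) (hq : q ∈ U) (a b : ℂ × ℂ)
    (ε : ℂ) :
    wirtDBar2 (phi t a b ε) q
      = (1 / 2) * ((1 / 2) * (fderiv ℝ (fderiv ℝ t) q (0, 1) a
            + ε * fderiv ℝ (fderiv ℝ t) q (0, 1) b)
          + Complex.I * ((1 / 2) * (fderiv ℝ (fderiv ℝ t) q (0, Complex.I) a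
            + ε * fderiv ℝ (fderiv ℝ t) q (0, Complex.I) b))) := by
  rw [wirtDBar2_of_hasFDerivAt (phi_hasFDerivAt hU ht hq a b ε)]
  simp [smul_eq_mul]
  ring

lemma hsymm (hU : IsOpen U) (ht : ContDiffOn ℝ 2 t U) (hq : q ∈ U) (v w : ℂ × ℂ) :
    fderiv ℝ (fderiv ℝ t) q v w = fderiv ℝ (fderiv ℝ t) q w v :=
  (ContDiffAt.isSymmSndFDerivAt (ht.contDiffAt (hU.mem_nhds hq)) (by simp)) v w

/-- commutation 1: `∂/∂z₁ ∂/∂z̄₂ = ∂/∂z̄₂ ∂/∂z₁`. -/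
lemma comm1 (hU : IsOpen U) (ht : ContDiffOn ℝ 2 t U) (hq : q ∈ U) :
    wirtD1 (fun p => wirtDBar2 t p) q = wirtDBar2 (fun p => wirtD1 t p) q := by
  have e1 : wirtD1 (fun p => wirtDBar2 t p) q
      = wirtD1 (phi t (0, 1) (0, Complex.I) Complex.I) q :=
    wirtD1_congr_on hU (fun p hp => wirtDBar2_eq_phi hU (ht.of_le one_le_two) hp) hq
  have e2 : wirtDBar2 (fun p => wirtD1 t p) q
      = wirtDBar2 (phi t (1, 0) (Complex.I, 0) (-Complex.I)) q :=
    wirtDBar2_congr_on hU (fun p hp => wirtD1_eq_phi hU (ht.of_le one_le_two) hp) hq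
  rw [e1, e2, wirtD1_phi hU ht hq, wirtDBar2_phi hU ht hq,
    hsymm hU ht hq (1, 0) (0, 1), hsymm hU ht hq (1, 0) (0, Complex.I),
    hsymm hU ht hq (Complex.I, 0) (0, 1), hsymm hU ht hq (Complex.I, 0) (0, Complex.I)]
  ring

/-- commutation 2: `∂/∂z₂ ∂/∂z̄₂ = ∂/∂z̄₂ ∂/∂z₂`. -/
lemma comm2 (hU : IsOpen U) (ht : ContDiffOn ℝ 2 t U) (hq : q ∈ U) :
    wirtD2 (fun p => wirtDBar2 t p) q = wirtDBar2 (fun p => wirtD2 t p) q := by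
  have e1 : wirtD2 (fun p => wirtDBar2 t p) q
      = wirtD2 (phi t (0, 1) (0, Complex.I) Complex.I) q :=
    wirtD2_congr_on hU (fun p hp => wirtDBar2_eq_phi hU (ht.of_le one_le_two) hp) hq
  have e2 : wirtDBar2 (fun p => wirtD2 t p) q
      = wirtDBar2 (phi t (0, 1) (0, Complex.I) (-Complex.I)) q :=
    wirtDBar2_congr_on hU (fun p hp => wirtD2_eq_phi hU (ht.of_le one_le_two) hp) hq
  rw [e1, e2, wirtD2_phi hU ht hq, wirtDBar2_phi hU ht hq,
    hsymm hU ht hq (0, 1) (0, Complex.I)]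
  ring

end

lemma polar_map_abs (p : ℝ × ℝ) :
    ‖(p.1 : ℂ) * Complex.exp ((p.2 : ℂ) * Complex.I)‖ = |p.1| := by
  simp [Complex.norm_exp]

lemma polar_map_cont : Continuous (fun p : ℝ × ℝ => (p.1 : ℂ) * Complex.exp ((p.2 : ℂ) * Complex.I)) := by
  fun_prop

lemma setIntegral_ball_polar {r : ℝ} (hr : 0 < r) (F : ℂ → ℂ)
    (hF : ContinuousOn F (closedBall (0 : ℂ) r)) :
    ∫ w in ball (0 : ℂ) r, F w
      = ∫ ρ in (0:ℝ)..r, ∫ θ in (-π)..π,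
          (ρ : ℂ) * F ((ρ : ℂ) * Complex.exp ((θ : ℂ) * Complex.I)) := by
  have hsymm_eq : ∀ p : ℝ × ℝ, Complex.polarCoord.symm p
      = (p.1 : ℂ) * Complex.exp ((p.2 : ℂ) * Complex.I) := by
    intro p
    rw [Complex.polarCoord_symm_apply, Complex.exp_mul_I]
    push_cast
    ring
  set Φ : ℝ × ℝ → ℂ := fun p => (p.1 : ℂ) * Complex.exp ((p.2 : ℂ) * Complex.I) with hΦ
  set G : ℝ × ℝ → ℂ := fun p => (p.1 : ℂ) * F (Φ p) with hG
  have hGcont : ContinuousOn G (Icc (0:ℝ) r ×ˢ Icc (-π) π) := by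
    apply ContinuousOn.mul (by fun_prop)
    apply hF.comp polar_map_cont.continuousOn
    intro p hp
    simp only [mem_closedBall, dist_zero_right]
    rw [polar_map_abs, abs_le]
    exact ⟨by linarith [hp.1.1], hp.1.2⟩
  have hGint : IntegrableOn G (Ioo (0:ℝ) r ×ˢ Ioo (-π) π) volume := by
    apply (hGcont.integrableOn_compact (isCompact_Icc.prod isCompact_Icc)).mono_set
    exact Set.prod_mono Ioo_subset_Icc_self Ioo_subset_Icc_self
  have key : ∫ w in ball (0 : ℂ) r, F w = ∫ p in Ioo (0:ℝ) r ×ˢ Ioo (-π) π, G p := by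
    have h1 : ∫ w in ball (0 : ℂ) r, F w = ∫ w, (ball (0:ℂ) r).indicator F w :=
      (integral_indicator measurableSet_ball).symm
    rw [h1, ← Complex.integral_comp_polarCoord_symm]
    have h2 : ∀ p ∈ polarCoord.target,
        p.1 • (ball (0:ℂ) r).indicator F (Complex.polarCoord.symm p)
          = ({p : ℝ × ℝ | p.1 < r}).indicator G p := by
      intro p hp
      rw [polarCoord_target] at hp
      have hp1 : 0 < p.1 := hp.1
      have habs : Complex.polarCoord.symm p ∈ ball (0:ℂ) r ↔ p.1 < r := by
        rw [mem_ball, dist_zero_right, hsymm_eq, polar_map_abs,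
          abs_of_pos hp1]
      by_cases h : p.1 < r
      · rw [indicator_of_mem (habs.2 h),
          indicator_of_mem (show p ∈ {q : ℝ × ℝ | q.1 < r} from h)]
        rw [hsymm_eq p, Complex.real_smul]
      · rw [indicator_of_notMem (fun hc => h (habs.1 hc)),
          indicator_of_notMem (show p ∉ {q : ℝ × ℝ | q.1 < r} from h), smul_zero]
    rw [setIntegral_congr_fun polarCoord.open_target.measurableSet h2,
      setIntegral_indicator (measurableSet_lt measurable_fst measurable_const)]
    have hset : polarCoord.target ∩ {q : ℝ × ℝ | q.1 < r} = Ioo (0:ℝ) r ×ˢ Ioo (-π) π := by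
      rw [polarCoord_target]
      ext p
      simp only [mem_inter_iff, mem_prod, mem_Ioi, mem_Ioo, mem_setOf_eq]
      tauto
    rw [hset]
  rw [key, Measure.volume_eq_prod, setIntegral_prod _ (by rwa [← Measure.volume_eq_prod]),
    intervalIntegral.integral_of_le hr.le, integral_Ioc_eq_integral_Ioo]
  apply setIntegral_congr_fun measurableSet_Ioo
  intro x _
  beta_reduce
  rw [intervalIntegral.integral_of_le (by linarith [Real.pi_pos] : -π ≤ π),
    integral_Ioc_eq_integral_Ioo]




noncomputable def pm (p : ℝ × ℝ) : ℂ := (p.1 : ℂ) * Complex.exp ((p.2 : ℂ) * Complex.I)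

noncomputable def sndI : ℝ × ℝ →L[ℝ] ℂ :=
  (ContinuousLinearMap.snd ℝ ℝ ℝ).smulRight Complex.I

noncomputable def pmD (p : ℝ × ℝ) : ℝ × ℝ →L[ℝ] ℂ :=
  (ContinuousLinearMap.fst ℝ ℝ ℝ).smulRight (Complex.exp ((p.2 : ℂ) * Complex.I))
    + (ContinuousLinearMap.snd ℝ ℝ ℝ).smulRight
        ((p.1 : ℂ) * Complex.exp ((p.2 : ℂ) * Complex.I) * Complex.I)

lemma pm_cont : Continuous pm := by unfold pm; fun_prop

lemma pm_abs (p : ℝ × ℝ) : ‖pm p‖ = |p.1| := by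
  simp [pm, Complex.norm_exp]

lemma exp_snd_hasFDerivAt (p : ℝ × ℝ) :
    HasFDerivAt (fun q : ℝ × ℝ => Complex.exp ((q.2 : ℂ) * Complex.I))
      (Complex.exp ((p.2 : ℂ) * Complex.I) • sndI) p := by
  have hM : HasFDerivAt (fun q : ℝ × ℝ => (q.2 : ℂ) * Complex.I) sndI p := by
    have h : (fun q : ℝ × ℝ => (q.2 : ℂ) * Complex.I) = fun q => sndI q := by
      ext q; simp [sndI, Complex.real_smul]
    rw [h]; exact sndI.hasFDerivAt
  exact (Complex.hasDerivAt_exp ((p.2 : ℂ) * Complex.I)).comp_hasFDerivAt p hM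

lemma pm_hasFDerivAt (p : ℝ × ℝ) : HasFDerivAt pm (pmD p) p := by
  have h1 : HasFDerivAt (fun q : ℝ × ℝ => (q.1 : ℂ))
      (Complex.ofRealCLM.comp (ContinuousLinearMap.fst ℝ ℝ ℝ)) p := by
    have h : (fun q : ℝ × ℝ => (q.1 : ℂ))
        = fun q => (Complex.ofRealCLM.comp (ContinuousLinearMap.fst ℝ ℝ ℝ)) q := by
      ext q; simp
    rw [h]; exact (Complex.ofRealCLM.comp (ContinuousLinearMap.fst ℝ ℝ ℝ)).hasFDerivAt
  have := h1.mul (exp_snd_hasFDerivAt p)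
  have heq : (((p.1:ℂ)) • (Complex.exp ((p.2 : ℂ) * Complex.I) • sndI)
      + Complex.exp ((p.2 : ℂ) * Complex.I) • (Complex.ofRealCLM.comp
          (ContinuousLinearMap.fst ℝ ℝ ℝ))) = pmD p := by
    refine ContinuousLinearMap.ext fun v => ?_
    simp [pmD, sndI, smul_eq_mul, Complex.real_smul]
    ring
  rw [heq] at this
  exact this

lemma pmD_apply10 (p : ℝ × ℝ) : pmD p ((1:ℝ), (0:ℝ)) = Complex.exp ((p.2 : ℂ) * Complex.I) := by
  simp [pmD]

lemma pmD_apply01 (p : ℝ × ℝ) :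
    pmD p ((0:ℝ), (1:ℝ)) = (p.1 : ℂ) * Complex.exp ((p.2 : ℂ) * Complex.I) * Complex.I := by
  simp [pmD]

lemma rect_maps_closedBall {r : ℝ} (hr : 0 < r) :
    ∀ p ∈ uIcc (0:ℝ) r ×ˢ uIcc (-π) π, pm p ∈ closedBall (0:ℂ) r := by
  intro p hp
  rw [uIcc_of_le hr.le] at hp
  simp only [mem_closedBall, dist_zero_right, pm_abs]
  rw [abs_le]
  exact ⟨by linarith [hp.1.1], hp.1.2⟩

lemma exp_theta_expand (θ : ℝ) :
    Complex.exp ((θ : ℂ) * Complex.I)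
      = (Real.cos θ : ℂ) + (Real.sin θ : ℂ) * Complex.I := by
  rw [Complex.exp_mul_I]
  norm_cast

lemma L_exp_expand (L : ℂ →L[ℝ] ℂ) (θ : ℝ) :
    L (Complex.exp ((θ : ℂ) * Complex.I))
      = (Real.cos θ : ℂ) * L 1 + (Real.sin θ : ℂ) * L Complex.I := by
  have h : Complex.exp ((θ : ℂ) * Complex.I)
      = (Real.cos θ) • (1:ℂ) + (Real.sin θ) • Complex.I := by
    rw [exp_theta_expand]; simp [Complex.real_smul]
  rw [h, map_add, L.map_smul, L.map_smul, Complex.real_smul, Complex.real_smul]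

lemma L_rho_exp_I_expand (L : ℂ →L[ℝ] ℂ) (ρ θ : ℝ) :
    L ((ρ : ℂ) * Complex.exp ((θ : ℂ) * Complex.I) * Complex.I)
      = (-(ρ * Real.sin θ) : ℝ) • L 1 + ((ρ * Real.cos θ) : ℝ) • L Complex.I := by
  have h : (ρ : ℂ) * Complex.exp ((θ : ℂ) * Complex.I) * Complex.I
      = (-(ρ * Real.sin θ) : ℝ) • (1:ℂ) + ((ρ * Real.cos θ) : ℝ) • Complex.I := by
    rw [exp_theta_expand]
    simp only [Complex.real_smul]
    push_cast
    ring_nf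
    rw [Complex.I_sq]
    ring
  rw [h, map_add, L.map_smul, L.map_smul]

lemma cos_sq_add_sin_sq_complex (θ : ℝ) :
    (Real.cos θ : ℂ) ^ 2 + (Real.sin θ : ℂ) ^ 2 = 1 := by
  exact_mod_cast congrArg (Complex.ofReal) (Real.cos_sq_add_sin_sq θ)

lemma stokes_dbar {r : ℝ} {V : Set ℂ} {g : ℂ → ℂ} (hr : 0 < r) (hV : IsOpen V)
    (hsub : closedBall (0:ℂ) r ⊆ V) (hg : ContDiffOn ℝ 1 g V) :
    ∫ w in ball (0:ℂ) r,
        (1/2 : ℂ) * (fderiv ℝ g w 1 + Complex.I * fderiv ℝ g w Complex.I)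
      = -(Complex.I/2) * contourDw r g := by
  have hgd : ∀ w ∈ V, HasFDerivAt g (fderiv ℝ g w) w := fun w hw =>
    (((hg.differentiableOn one_ne_zero).differentiableAt (hV.mem_nhds hw))).hasFDerivAt
  have hLgcont : ContinuousOn (fderiv ℝ g) V := hg.continuousOn_fderiv_of_isOpen hV le_rfl
  set f : ℝ × ℝ → ℂ := fun p => pm p * g (pm p) with hf
  set gg : ℝ × ℝ → ℂ :=
    fun p => Complex.I * Complex.exp ((p.2:ℂ) * Complex.I) * g (pm p) with hgg
  set f' : ℝ × ℝ → (ℝ × ℝ →L[ℝ] ℂ) := fun p =>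
    (pm p • fderiv ℝ g (pm p) + g (pm p) • ContinuousLinearMap.id ℝ ℂ).comp (pmD p) with hf'
  set gg' : ℝ × ℝ → (ℝ × ℝ →L[ℝ] ℂ) := fun p =>
    (Complex.I * Complex.exp ((p.2:ℂ) * Complex.I)) • ((fderiv ℝ g (pm p)).comp (pmD p))
      + g (pm p) • (Complex.I • (Complex.exp ((p.2:ℂ) * Complex.I) • sndI)) with hgg'
  have hmapsV : ∀ p ∈ uIcc (0:ℝ) r ×ˢ uIcc (-π) π, pm p ∈ V :=
    fun p hp => hsub (rect_maps_closedBall hr p hp)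
  have hgcont : ContinuousOn g V := hg.continuousOn
  have Hcf : ContinuousOn f (uIcc (0:ℝ) r ×ˢ uIcc (-π) π) := by
    exact (pm_cont.continuousOn).mul
      (hgcont.comp pm_cont.continuousOn (fun p hp => hmapsV p hp))
  have Hcg : ContinuousOn gg (uIcc (0:ℝ) r ×ˢ uIcc (-π) π) := by
    exact ((continuous_const.mul (by fun_prop : Continuous
        (fun p : ℝ × ℝ => Complex.exp ((p.2:ℂ) * Complex.I)))).continuousOn).mul
      (hgcont.comp pm_cont.continuousOn (fun p hp => hmapsV p hp))
  have hopen_mem : ∀ p ∈ Ioo (min (0:ℝ) r) (max (0:ℝ) r) ×ˢ Ioo (min (-π) π) (max (-π) π),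
      pm p ∈ V := by
    intro p hp
    apply hsub
    simp only [mem_closedBall, dist_zero_right, pm_abs]
    rw [min_eq_left hr.le, max_eq_right hr.le] at hp
    rw [abs_le]
    exact ⟨by linarith [hp.1.1], by linarith [hp.1.2]⟩
  have Hdf : ∀ p ∈ (Ioo (min (0:ℝ) r) (max (0:ℝ) r) ×ˢ Ioo (min (-π) π) (max (-π) π)) \
      (∅ : Set (ℝ × ℝ)), HasFDerivAt f (f' p) p := by
    rintro p ⟨hp, -⟩
    have hgfd := hgd (pm p) (hopen_mem p hp)
    exact ((hasFDerivAt_id (pm p)).mul hgfd).comp p (pm_hasFDerivAt p)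
  have Hdg : ∀ p ∈ (Ioo (min (0:ℝ) r) (max (0:ℝ) r) ×ˢ Ioo (min (-π) π) (max (-π) π)) \
      (∅ : Set (ℝ × ℝ)), HasFDerivAt gg (gg' p) p := by
    rintro p ⟨hp, -⟩
    have hgfd := (hgd (pm p) (hopen_mem p hp)).comp p (pm_hasFDerivAt p)
    exact ((exp_snd_hasFDerivAt p).const_mul Complex.I).mul hgfd
  have hfeval : ∀ p : ℝ × ℝ, f' p ((1:ℝ),(0:ℝ))
      = pm p * fderiv ℝ g (pm p) (Complex.exp ((p.2:ℂ) * Complex.I))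
        + g (pm p) * Complex.exp ((p.2:ℂ) * Complex.I) := by
    intro p
    simp [hf', pmD_apply10, smul_eq_mul]
  have hggeval : ∀ p : ℝ × ℝ, gg' p ((0:ℝ),(1:ℝ))
      = Complex.I * Complex.exp ((p.2:ℂ) * Complex.I)
          * fderiv ℝ g (pm p) ((p.1:ℂ) * Complex.exp ((p.2:ℂ) * Complex.I) * Complex.I)
        + g (pm p) * (Complex.I * (Complex.exp ((p.2:ℂ) * Complex.I) * Complex.I)) := by
    intro p
    simp [hgg', pmD_apply01, sndI, smul_eq_mul]
  have hptwise : ∀ p : ℝ × ℝ, f' p ((1:ℝ),(0:ℝ)) + gg' p ((0:ℝ),(1:ℝ))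
      = (p.1:ℂ) * (fderiv ℝ g (pm p) 1 + Complex.I * fderiv ℝ g (pm p) Complex.I) := by
    intro p
    rw [hfeval p, hggeval p]
    set L := fderiv ℝ g (pm p) with hL
    set gv := g (pm p) with hgv
    rw [L_exp_expand L p.2, L_rho_exp_I_expand L p.1 p.2]
    set A := L 1 with hA
    set B := L Complex.I with hB
    simp only [pm, exp_theta_expand, Complex.real_smul, Complex.ofReal_neg, Complex.ofReal_mul]
    set x := (Real.cos p.2 : ℂ)
    set y := (Real.sin p.2 : ℂ)
    set ρ := (p.1 : ℂ)
    have hone : x^2 + y^2 = 1 := cos_sq_add_sin_sq_complex p.2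
    have hI : Complex.I^2 = -1 := Complex.I_sq
    linear_combination (ρ*A + ρ*Complex.I*B) * hone
      + (-(ρ*A*y^2) + ρ*B*x*y + gv*(x+y*Complex.I)) * hI
  have hLg_rect : ContinuousOn (fun p : ℝ × ℝ => fderiv ℝ g (pm p))
      (uIcc (0:ℝ) r ×ˢ uIcc (-π) π) :=
    hLgcont.comp pm_cont.continuousOn hmapsV
  have Hi : IntegrableOn (fun p : ℝ × ℝ => f' p ((1:ℝ),(0:ℝ)) + gg' p ((0:ℝ),(1:ℝ)))
      (uIcc (0:ℝ) r ×ˢ uIcc (-π) π) := by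
    have heq : (fun p : ℝ × ℝ => f' p ((1:ℝ),(0:ℝ)) + gg' p ((0:ℝ),(1:ℝ)))
        = fun p => (p.1:ℂ) * (fderiv ℝ g (pm p) 1 + Complex.I * fderiv ℝ g (pm p) Complex.I) :=
      funext hptwise
    rw [heq]
    apply ContinuousOn.integrableOn_compact (isCompact_uIcc.prod isCompact_uIcc)
    exact (by fun_prop : Continuous (fun p : ℝ × ℝ => (p.1:ℂ))).continuousOn.mul
      ((hLg_rect.clm_apply continuousOn_const).add
        (continuousOn_const.mul (hLg_rect.clm_apply continuousOn_const)))
  have hdiv := MeasureTheory.integral2_divergence_prod_of_hasFDerivAt_off_countable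
    f gg f' gg' 0 (-π) r π ∅ Set.countable_empty Hcf Hcg Hdf Hdg Hi
  have hb2 : (∫ x in (0:ℝ)..r, gg (x, π)) = ∫ x in (0:ℝ)..r, gg (x, -π) := by
    apply intervalIntegral.integral_congr
    intro x _
    have h1 : Complex.exp (((π:ℝ):ℂ) * Complex.I) = -1 := by
      push_cast; exact Complex.exp_pi_mul_I
    have h2 : Complex.exp ((((-π):ℝ):ℂ) * Complex.I) = -1 := by
      push_cast
      rw [neg_mul, Complex.exp_neg, Complex.exp_pi_mul_I]
      norm_num
    simp only [hgg, pm]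
    rw [h1, h2]
  have hb0 : (∫ y in (-π)..π, f ((0:ℝ), y)) = 0 := by
    have hz : EqOn (fun y : ℝ => f ((0:ℝ), y)) 0 (uIcc (-π) π) := fun y _ => by
      simp [hf, pm]
    rw [intervalIntegral.integral_congr hz]
    simp
  have hF : ContinuousOn
      (fun w => fderiv ℝ g w 1 + Complex.I * fderiv ℝ g w Complex.I) (closedBall (0:ℂ) r) :=
    (((hLgcont.mono hsub).clm_apply continuousOn_const).add
      (continuousOn_const.mul ((hLgcont.mono hsub).clm_apply continuousOn_const)))
  have hpolar := setIntegral_ball_polar hr _ hF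
  have hiter : (∫ ρ in (0:ℝ)..r, ∫ θ in (-π)..π,
        (ρ : ℂ) * (fderiv ℝ g ((ρ:ℂ) * Complex.exp ((θ:ℂ) * Complex.I)) 1
          + Complex.I * fderiv ℝ g ((ρ:ℂ) * Complex.exp ((θ:ℂ) * Complex.I)) Complex.I))
      = ∫ x in (0:ℝ)..r, ∫ y in (-π)..π, f' (x, y) ((1:ℝ),(0:ℝ)) + gg' (x, y) ((0:ℝ),(1:ℝ)) := by
    apply intervalIntegral.integral_congr
    intro x _
    apply intervalIntegral.integral_congr
    intro y _
    exact (hptwise (x, y)).symm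
  set P : ℝ → ℂ := fun θ => g ((r:ℂ) * Complex.exp ((θ:ℂ) * Complex.I))
      * (Complex.I * r * Complex.exp ((θ:ℂ) * Complex.I)) with hP
  have hPper : Function.Periodic P (2*π) := by
    intro θ
    have hθ : ((θ + 2*π : ℝ):ℂ) * Complex.I = (θ:ℂ) * Complex.I + 2*π*Complex.I := by
      push_cast; ring
    simp only [hP, hθ, Complex.exp_add, Complex.exp_two_pi_mul_I, mul_one]
  have hcontour : contourDw r g = ∫ θ in (-π)..π, P θ := by
    rw [contourDw]
    have h1 : (∫ θ in (0:ℝ)..(2*π), g (↑r * Complex.exp (Complex.I * ↑θ))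
          * (Complex.I * ↑r * Complex.exp (Complex.I * ↑θ))) = ∫ θ in (0:ℝ)..(2*π), P θ := by
      apply intervalIntegral.integral_congr
      intro θ _
      simp only [hP, mul_comm Complex.I ((θ:ℂ))]
    rw [h1]
    have h2 := hPper.intervalIntegral_add_eq 0 (-π)
    rw [show (0:ℝ) + 2*π = 2*π by ring, show -π + 2*π = π by ring] at h2
    exact h2
  have hfr_int : (∫ y in (-π)..π, f (r, y)) = -Complex.I * contourDw r g := by
    rw [hcontour, ← intervalIntegral.integral_const_mul]
    apply intervalIntegral.integral_congr
    intro y _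
    simp only [hf, hP, pm]
    linear_combination (↑r * Complex.exp ((y:ℂ)*Complex.I)
      * g (↑r * Complex.exp ((y:ℂ)*Complex.I))) * Complex.I_sq
  calc ∫ w in ball (0:ℂ) r,
        (1/2 : ℂ) * (fderiv ℝ g w 1 + Complex.I * fderiv ℝ g w Complex.I)
      = (1/2 : ℂ) * ∫ w in ball (0:ℂ) r,
          (fderiv ℝ g w 1 + Complex.I * fderiv ℝ g w Complex.I) := by
        rw [integral_const_mul]
    _ = (1/2 : ℂ) * (((∫ x in (0:ℝ)..r, gg (x, π)) - ∫ x in (0:ℝ)..r, gg (x, -π))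
          + (∫ y in (-π)..π, f (r, y)) - ∫ y in (-π)..π, f ((0:ℝ), y)) := by
        rw [hpolar, hiter, hdiv]
    _ = -(Complex.I/2) * contourDw r g := by
        rw [hb2, hb0, hfr_int]
        ring

noncomputable def pmBar (p : ℝ × ℝ) : ℂ := (p.1 : ℂ) * Complex.exp (-((p.2 : ℂ) * Complex.I))

noncomputable def sndNegI : ℝ × ℝ →L[ℝ] ℂ :=
  (ContinuousLinearMap.snd ℝ ℝ ℝ).smulRight (-Complex.I)

noncomputable def pmBarD (p : ℝ × ℝ) : ℝ × ℝ →L[ℝ] ℂ :=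
  (ContinuousLinearMap.fst ℝ ℝ ℝ).smulRight (Complex.exp (-((p.2 : ℂ) * Complex.I)))
    + (ContinuousLinearMap.snd ℝ ℝ ℝ).smulRight
        (-((p.1 : ℂ) * Complex.exp (-((p.2 : ℂ) * Complex.I)) * Complex.I))

lemma expNeg_snd_hasFDerivAt (p : ℝ × ℝ) :
    HasFDerivAt (fun q : ℝ × ℝ => Complex.exp (-((q.2 : ℂ) * Complex.I)))
      (Complex.exp (-((p.2 : ℂ) * Complex.I)) • sndNegI) p := by
  have hM : HasFDerivAt (fun q : ℝ × ℝ => -((q.2 : ℂ) * Complex.I)) sndNegI p := by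
    have h : (fun q : ℝ × ℝ => -((q.2 : ℂ) * Complex.I)) = fun q => sndNegI q := by
      ext q; simp [sndNegI, Complex.real_smul]
    rw [h]; exact sndNegI.hasFDerivAt
  exact (Complex.hasDerivAt_exp (-((p.2 : ℂ) * Complex.I))).comp_hasFDerivAt p hM

lemma pmBar_hasFDerivAt (p : ℝ × ℝ) : HasFDerivAt pmBar (pmBarD p) p := by
  have h1 : HasFDerivAt (fun q : ℝ × ℝ => (q.1 : ℂ))
      (Complex.ofRealCLM.comp (ContinuousLinearMap.fst ℝ ℝ ℝ)) p := by
    have h : (fun q : ℝ × ℝ => (q.1 : ℂ))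
        = fun q => (Complex.ofRealCLM.comp (ContinuousLinearMap.fst ℝ ℝ ℝ)) q := by
      ext q; simp
    rw [h]; exact (Complex.ofRealCLM.comp (ContinuousLinearMap.fst ℝ ℝ ℝ)).hasFDerivAt
  have := h1.mul (expNeg_snd_hasFDerivAt p)
  have heq : (((p.1:ℂ)) • (Complex.exp (-((p.2 : ℂ) * Complex.I)) • sndNegI)
      + Complex.exp (-((p.2 : ℂ) * Complex.I)) • (Complex.ofRealCLM.comp
          (ContinuousLinearMap.fst ℝ ℝ ℝ))) = pmBarD p := by
    refine ContinuousLinearMap.ext fun v => ?_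
    simp [pmBarD, sndNegI, smul_eq_mul, Complex.real_smul]
    ring
  rw [heq] at this
  exact this

lemma pmBarD_apply10 (p : ℝ × ℝ) :
    pmBarD p ((1:ℝ), (0:ℝ)) = Complex.exp (-((p.2 : ℂ) * Complex.I)) := by
  simp [pmBarD]

lemma exp_neg_theta_expand (θ : ℝ) :
    Complex.exp (-((θ : ℂ) * Complex.I))
      = (Real.cos θ : ℂ) - (Real.sin θ : ℂ) * Complex.I := by
  have h : -((θ : ℂ) * Complex.I) = ((-θ : ℝ) : ℂ) * Complex.I := by push_cast; ring
  rw [h, exp_theta_expand, Real.cos_neg, Real.sin_neg]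
  push_cast
  ring

lemma stokes_d {r : ℝ} {V : Set ℂ} {g : ℂ → ℂ} (hr : 0 < r) (hV : IsOpen V)
    (hsub : closedBall (0:ℂ) r ⊆ V) (hg : ContDiffOn ℝ 1 g V) :
    ∫ w in ball (0:ℂ) r,
        (1/2 : ℂ) * (fderiv ℝ g w 1 - Complex.I * fderiv ℝ g w Complex.I)
      = (Complex.I/2) * contourDwBar r g := by
  have hgd : ∀ w ∈ V, HasFDerivAt g (fderiv ℝ g w) w := fun w hw =>
    (((hg.differentiableOn one_ne_zero).differentiableAt (hV.mem_nhds hw))).hasFDerivAt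
  have hLgcont : ContinuousOn (fderiv ℝ g) V := hg.continuousOn_fderiv_of_isOpen hV le_rfl
  set f : ℝ × ℝ → ℂ := fun p => pmBar p * g (pm p) with hf
  set gg : ℝ × ℝ → ℂ :=
    fun p => -Complex.I * Complex.exp (-((p.2:ℂ) * Complex.I)) * g (pm p) with hgg
  set f' : ℝ × ℝ → (ℝ × ℝ →L[ℝ] ℂ) := fun p =>
    pmBar p • ((fderiv ℝ g (pm p)).comp (pmD p)) + g (pm p) • pmBarD p with hf'
  set gg' : ℝ × ℝ → (ℝ × ℝ →L[ℝ] ℂ) := fun p =>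
    (-Complex.I * Complex.exp (-((p.2:ℂ) * Complex.I)))
        • ((fderiv ℝ g (pm p)).comp (pmD p))
      + g (pm p) • ((-Complex.I) • (Complex.exp (-((p.2:ℂ) * Complex.I)) • sndNegI)) with hgg'
  have hmapsV : ∀ p ∈ uIcc (0:ℝ) r ×ˢ uIcc (-π) π, pm p ∈ V :=
    fun p hp => hsub (rect_maps_closedBall hr p hp)
  have hgcont : ContinuousOn g V := hg.continuousOn
  have Hcf : ContinuousOn f (uIcc (0:ℝ) r ×ˢ uIcc (-π) π) := by
    exact ((by unfold pmBar; fun_prop : Continuous pmBar).continuousOn).mul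
      (hgcont.comp pm_cont.continuousOn (fun p hp => hmapsV p hp))
  have Hcg : ContinuousOn gg (uIcc (0:ℝ) r ×ˢ uIcc (-π) π) := by
    exact ((continuous_const.mul (by fun_prop : Continuous
        (fun p : ℝ × ℝ => Complex.exp (-((p.2:ℂ) * Complex.I))))).continuousOn).mul
      (hgcont.comp pm_cont.continuousOn (fun p hp => hmapsV p hp))
  have hopen_mem : ∀ p ∈ Ioo (min (0:ℝ) r) (max (0:ℝ) r) ×ˢ Ioo (min (-π) π) (max (-π) π),
      pm p ∈ V := by
    intro p hp
    apply hsub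
    simp only [mem_closedBall, dist_zero_right, pm_abs]
    rw [min_eq_left hr.le, max_eq_right hr.le] at hp
    rw [abs_le]
    exact ⟨by linarith [hp.1.1], by linarith [hp.1.2]⟩
  have Hdf : ∀ p ∈ (Ioo (min (0:ℝ) r) (max (0:ℝ) r) ×ˢ Ioo (min (-π) π) (max (-π) π)) \
      (∅ : Set (ℝ × ℝ)), HasFDerivAt f (f' p) p := by
    rintro p ⟨hp, -⟩
    have hgfd := (hgd (pm p) (hopen_mem p hp)).comp p (pm_hasFDerivAt p)
    exact (pmBar_hasFDerivAt p).mul hgfd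
  have Hdg : ∀ p ∈ (Ioo (min (0:ℝ) r) (max (0:ℝ) r) ×ˢ Ioo (min (-π) π) (max (-π) π)) \
      (∅ : Set (ℝ × ℝ)), HasFDerivAt gg (gg' p) p := by
    rintro p ⟨hp, -⟩
    have hgfd := (hgd (pm p) (hopen_mem p hp)).comp p (pm_hasFDerivAt p)
    exact ((expNeg_snd_hasFDerivAt p).const_mul (-Complex.I)).mul hgfd
  have hfeval : ∀ p : ℝ × ℝ, f' p ((1:ℝ),(0:ℝ))
      = pmBar p * fderiv ℝ g (pm p) (Complex.exp ((p.2:ℂ) * Complex.I))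
        + g (pm p) * Complex.exp (-((p.2:ℂ) * Complex.I)) := by
    intro p
    simp [hf', pmD_apply10, pmBarD_apply10, smul_eq_mul]
  have hggeval : ∀ p : ℝ × ℝ, gg' p ((0:ℝ),(1:ℝ))
      = -Complex.I * Complex.exp (-((p.2:ℂ) * Complex.I))
          * fderiv ℝ g (pm p) ((p.1:ℂ) * Complex.exp ((p.2:ℂ) * Complex.I) * Complex.I)
        + g (pm p) * (-Complex.I * (Complex.exp (-((p.2:ℂ) * Complex.I)) * -Complex.I)) := by
    intro p
    simp [hgg', pmD_apply01, sndNegI, smul_eq_mul]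
  have hptwise : ∀ p : ℝ × ℝ, f' p ((1:ℝ),(0:ℝ)) + gg' p ((0:ℝ),(1:ℝ))
      = (p.1:ℂ) * (fderiv ℝ g (pm p) 1 - Complex.I * fderiv ℝ g (pm p) Complex.I) := by
    intro p
    rw [hfeval p, hggeval p]
    set L := fderiv ℝ g (pm p) with hL
    set gv := g (pm p) with hgv
    rw [L_exp_expand L p.2, L_rho_exp_I_expand L p.1 p.2]
    set A := L 1 with hA
    set B := L Complex.I with hB
    simp only [pmBar, exp_theta_expand, exp_neg_theta_expand, Complex.real_smul,
      Complex.ofReal_neg, Complex.ofReal_mul]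
    set x := (Real.cos p.2 : ℂ)
    set y := (Real.sin p.2 : ℂ)
    set ρ := (p.1 : ℂ)
    have hone : x^2 + y^2 = 1 := cos_sq_add_sin_sq_complex p.2
    have hI : Complex.I^2 = -1 := Complex.I_sq
    linear_combination (ρ*A - ρ*Complex.I*B) * hone
      + (-(ρ*A*y^2) + ρ*B*x*y + gv*(x - y*Complex.I)) * hI
  have hLg_rect : ContinuousOn (fun p : ℝ × ℝ => fderiv ℝ g (pm p))
      (uIcc (0:ℝ) r ×ˢ uIcc (-π) π) :=
    hLgcont.comp pm_cont.continuousOn hmapsV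
  have Hi : IntegrableOn (fun p : ℝ × ℝ => f' p ((1:ℝ),(0:ℝ)) + gg' p ((0:ℝ),(1:ℝ)))
      (uIcc (0:ℝ) r ×ˢ uIcc (-π) π) := by
    have heq : (fun p : ℝ × ℝ => f' p ((1:ℝ),(0:ℝ)) + gg' p ((0:ℝ),(1:ℝ)))
        = fun p => (p.1:ℂ) * (fderiv ℝ g (pm p) 1 - Complex.I * fderiv ℝ g (pm p) Complex.I) :=
      funext hptwise
    rw [heq]
    apply ContinuousOn.integrableOn_compact (isCompact_uIcc.prod isCompact_uIcc)
    exact (by fun_prop : Continuous (fun p : ℝ × ℝ => (p.1:ℂ))).continuousOn.mul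
      ((hLg_rect.clm_apply continuousOn_const).sub
        (continuousOn_const.mul (hLg_rect.clm_apply continuousOn_const)))
  have hdiv := MeasureTheory.integral2_divergence_prod_of_hasFDerivAt_off_countable
    f gg f' gg' 0 (-π) r π ∅ Set.countable_empty Hcf Hcg Hdf Hdg Hi
  have hb2 : (∫ x in (0:ℝ)..r, gg (x, π)) = ∫ x in (0:ℝ)..r, gg (x, -π) := by
    apply intervalIntegral.integral_congr
    intro x _
    have h1 : Complex.exp (-(((π:ℝ):ℂ) * Complex.I)) = -1 := by
      push_cast
      rw [Complex.exp_neg, Complex.exp_pi_mul_I]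
      norm_num
    have h2 : Complex.exp (-((((-π):ℝ):ℂ) * Complex.I)) = -1 := by
      push_cast
      rw [neg_mul, neg_neg, Complex.exp_pi_mul_I]
    have h1' : Complex.exp (((π:ℝ):ℂ) * Complex.I) = -1 := by
      push_cast; exact Complex.exp_pi_mul_I
    have h2' : Complex.exp ((((-π):ℝ):ℂ) * Complex.I) = -1 := by
      push_cast
      rw [neg_mul, Complex.exp_neg, Complex.exp_pi_mul_I]
      norm_num
    simp only [hgg, pm]
    rw [h1, h2, h1', h2']
  have hb0 : (∫ y in (-π)..π, f ((0:ℝ), y)) = 0 := by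
    have hz : EqOn (fun y : ℝ => f ((0:ℝ), y)) 0 (uIcc (-π) π) := fun y _ => by
      simp [hf, pmBar]
    rw [intervalIntegral.integral_congr hz]
    simp
  have hF : ContinuousOn
      (fun w => fderiv ℝ g w 1 - Complex.I * fderiv ℝ g w Complex.I) (closedBall (0:ℂ) r) :=
    (((hLgcont.mono hsub).clm_apply continuousOn_const).sub
      (continuousOn_const.mul ((hLgcont.mono hsub).clm_apply continuousOn_const)))
  have hpolar := setIntegral_ball_polar hr _ hF
  have hiter : (∫ ρ in (0:ℝ)..r, ∫ θ in (-π)..π,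
        (ρ : ℂ) * (fderiv ℝ g ((ρ:ℂ) * Complex.exp ((θ:ℂ) * Complex.I)) 1
          - Complex.I * fderiv ℝ g ((ρ:ℂ) * Complex.exp ((θ:ℂ) * Complex.I)) Complex.I))
      = ∫ x in (0:ℝ)..r, ∫ y in (-π)..π, f' (x, y) ((1:ℝ),(0:ℝ)) + gg' (x, y) ((0:ℝ),(1:ℝ)) := by
    apply intervalIntegral.integral_congr
    intro x _
    apply intervalIntegral.integral_congr
    intro y _
    exact (hptwise (x, y)).symm
  set P : ℝ → ℂ := fun θ => g ((r:ℂ) * Complex.exp ((θ:ℂ) * Complex.I))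
      * (-Complex.I * r * Complex.exp (-((θ:ℂ) * Complex.I))) with hP
  have hPper : Function.Periodic P (2*π) := by
    intro θ
    have h3 : Complex.exp (-(2*(π:ℂ)*Complex.I)) = 1 := by
      rw [Complex.exp_neg, Complex.exp_two_pi_mul_I]
      norm_num
    have e1 : ((θ + 2*π : ℝ):ℂ) * Complex.I = (θ:ℂ)*Complex.I + 2*(π:ℂ)*Complex.I := by
      push_cast; ring
    have e2 : Complex.exp (((θ + 2*π : ℝ):ℂ) * Complex.I)
        = Complex.exp ((θ:ℂ)*Complex.I) := by
      rw [e1, Complex.exp_add, Complex.exp_two_pi_mul_I, mul_one]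
    have e3 : Complex.exp (-(((θ + 2*π : ℝ):ℂ) * Complex.I))
        = Complex.exp (-((θ:ℂ)*Complex.I)) := by
      rw [e1, show -((θ:ℂ)*Complex.I + 2*(π:ℂ)*Complex.I)
          = -((θ:ℂ)*Complex.I) + -(2*(π:ℂ)*Complex.I) by ring,
        Complex.exp_add, h3, mul_one]
    simp only [hP, e2, e3]
  have hcontour : contourDwBar r g = ∫ θ in (-π)..π, P θ := by
    rw [contourDwBar]
    have h1 : (∫ θ in (0:ℝ)..(2*π), g (↑r * Complex.exp (Complex.I * ↑θ))
          * (-Complex.I * ↑r * Complex.exp (-(Complex.I * ↑θ))))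
        = ∫ θ in (0:ℝ)..(2*π), P θ := by
      apply intervalIntegral.integral_congr
      intro θ _
      simp only [hP, mul_comm Complex.I ((θ:ℂ))]
    rw [h1]
    have h2 := hPper.intervalIntegral_add_eq 0 (-π)
    rw [show (0:ℝ) + 2*π = 2*π by ring, show -π + 2*π = π by ring] at h2
    exact h2
  have hfr_int : (∫ y in (-π)..π, f (r, y)) = Complex.I * contourDwBar r g := by
    rw [hcontour, ← intervalIntegral.integral_const_mul]
    apply intervalIntegral.integral_congr
    intro y _
    simp only [hf, hP, pmBar, pm]
    linear_combination (↑r * Complex.exp (-((y:ℂ)*Complex.I))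
      * g (↑r * Complex.exp ((y:ℂ)*Complex.I))) * Complex.I_sq
  calc ∫ w in ball (0:ℂ) r,
        (1/2 : ℂ) * (fderiv ℝ g w 1 - Complex.I * fderiv ℝ g w Complex.I)
      = (1/2 : ℂ) * ∫ w in ball (0:ℂ) r,
          (fderiv ℝ g w 1 - Complex.I * fderiv ℝ g w Complex.I) := by
        rw [integral_const_mul]
    _ = (1/2 : ℂ) * (((∫ x in (0:ℝ)..r, gg (x, π)) - ∫ x in (0:ℝ)..r, gg (x, -π))
          + (∫ y in (-π)..π, f (r, y)) - ∫ y in (-π)..π, f ((0:ℝ), y)) := by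
        rw [hpolar, hiter, hdiv]
    _ = (Complex.I/2) * contourDwBar r g := by
        rw [hb2, hb0, hfr_int]
        ring

variable {E : Type*} [NormedAddCommGroup E] [NormedSpace ℝ E]

lemma slice_contOn {U : Set (ℂ × ℂ)} {F : ℂ × ℂ → E} (hF : ContinuousOn F U) (x : ℂ)
    {s : Set ℂ} (hs : ∀ w ∈ s, (x, w) ∈ U) : ContinuousOn (fun w => F (x, w)) s :=
  hF.comp (Continuous.continuousOn (by fun_prop)) hs

/-- Differentiation under the integral over the disc of radius `r`. -/
lemma dui {r : ℝ} (hr0 : 0 < r) {U : Set (ℂ × ℂ)} (hU : IsOpen U)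
    (hsub : closedBall (0:ℂ) 1 ×ˢ closedBall (0:ℂ) r ⊆ U)
    (F : ℂ × ℂ → E) (hF : ContDiffOn ℝ 1 F U) {z : ℂ} (hz : z ∈ ball (0:ℂ) 1) :
    HasFDerivAt (fun z' => ∫ w in ball (0:ℂ) r, F (z', w))
      (∫ w in ball (0:ℂ) r, (fderiv ℝ F (z, w)).comp (ContinuousLinearMap.inl ℝ ℂ ℂ)) z := by
  haveI : SecondCountableTopologyEither ℂ (ℂ →L[ℝ] E) :=
    secondCountableTopologyEither_of_left ℂ _
  haveI : IsFiniteMeasure (volume.restrict (ball (0:ℂ) r)) :=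
    ⟨by rw [Measure.restrict_apply_univ]; exact measure_ball_lt_top⟩
  have hz1 : ‖z‖ < 1 := by simpa [mem_ball, dist_zero_right] using hz
  set ε := (1 - ‖z‖) / 2 with hε_def
  have hε : 0 < ε := by rw [hε_def]; linarith
  have hball1 : closedBall z ε ⊆ closedBall (0:ℂ) 1 := by
    intro x hx
    simp only [mem_closedBall, dist_zero_right]
    calc ‖x‖ = ‖x - z + z‖ := by ring_nf
    _ ≤ ‖x - z‖ + ‖z‖ := norm_add_le _ _
    _ ≤ ε + ‖z‖ := by
        have := mem_closedBall_iff_norm.1 hx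
        linarith
    _ ≤ 1 := by rw [hε_def]; linarith
  have hCU : closedBall z ε ×ˢ closedBall (0:ℂ) r ⊆ U :=
    (Set.prod_mono hball1 subset_rfl).trans hsub
  have hmemC : ∀ x ∈ ball z ε, ∀ w ∈ ball (0:ℂ) r, (x, w) ∈ U := fun x hx w hw =>
    hCU ⟨ball_subset_closedBall hx, ball_subset_closedBall hw⟩
  have hFcont : ContinuousOn F U := hF.continuousOn
  have hF'cont : ContinuousOn
      (fun q => (fderiv ℝ F q).comp (ContinuousLinearMap.inl ℝ ℂ ℂ)) U :=
    (hF.continuousOn_fderiv_of_isOpen hU le_rfl).clm_comp continuousOn_const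
  obtain ⟨M, hM⟩ := ((isCompact_closedBall z ε).prod (isCompact_closedBall (0:ℂ) r)).exists_bound_of_continuousOn
    (hF'cont.mono hCU)
  have hdiff_slice : ∀ x w, (x, w) ∈ U →
      HasFDerivAt (fun x' => F (x', w))
        ((fderiv ℝ F (x, w)).comp (ContinuousLinearMap.inl ℝ ℂ ℂ)) x := by
    intro x w hq
    exact (((hF.differentiableOn one_ne_zero).differentiableAt
      (hU.mem_nhds hq)).hasFDerivAt).comp x (hasFDerivAt_prodMk_left x w)
  apply hasFDerivAt_integral_of_dominated_of_fderiv_le (bound := fun _ => M)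
    (F' := fun x w => (fderiv ℝ F (x, w)).comp (ContinuousLinearMap.inl ℝ ℂ ℂ)) (ball_mem_nhds z hε)
  · filter_upwards [ball_mem_nhds z hε] with x hx
    exact (slice_contOn hFcont x (fun w hw => hmemC x hx w hw)).aestronglyMeasurable
      measurableSet_ball
  · have : ContinuousOn (fun w => F (z, w)) (closedBall (0:ℂ) r) :=
      slice_contOn hFcont z (fun w hw => hCU ⟨mem_closedBall_self hε.le, hw⟩)
    exact (this.integrableOn_compact (isCompact_closedBall (0:ℂ) r)).mono_set ball_subset_closedBall
  · exact (slice_contOn (hF'cont) z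
      (fun w hw => hmemC z (mem_ball_self hε) w hw)).aestronglyMeasurable measurableSet_ball
  · filter_upwards [ae_restrict_mem measurableSet_ball] with w hw
    intro x hx
    exact hM _ ⟨ball_subset_closedBall hx, ball_subset_closedBall hw⟩
  · exact integrable_const M
  · filter_upwards [ae_restrict_mem measurableSet_ball] with w hw
    intro x hx
    exact hdiff_slice x w (hmemC x hx w hw)

/-- Continuity of a parametric integral over the disc of radius `r`. -/
lemma cont_param {r : ℝ} (hr0 : 0 < r) {U : Set (ℂ × ℂ)} (hU : IsOpen U)
    (hsub : closedBall (0:ℂ) 1 ×ˢ closedBall (0:ℂ) r ⊆ U)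
    (H : ℂ × ℂ → E) (hH : ContinuousOn H U) {z : ℂ} (hz : z ∈ ball (0:ℂ) 1) :
    ContinuousAt (fun z' => ∫ w in ball (0:ℂ) r, H (z', w)) z := by
  haveI : IsFiniteMeasure (volume.restrict (ball (0:ℂ) r)) :=
    ⟨by rw [Measure.restrict_apply_univ]; exact measure_ball_lt_top⟩
  have hz1 : ‖z‖ < 1 := by simpa [mem_ball, dist_zero_right] using hz
  set ε := (1 - ‖z‖) / 2 with hε_def
  have hε : 0 < ε := by rw [hε_def]; linarith
  have hball1 : closedBall z ε ⊆ closedBall (0:ℂ) 1 := by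
    intro x hx
    simp only [mem_closedBall, dist_zero_right]
    calc ‖x‖ = ‖x - z + z‖ := by ring_nf
    _ ≤ ‖x - z‖ + ‖z‖ := norm_add_le _ _
    _ ≤ ε + ‖z‖ := by
        have := mem_closedBall_iff_norm.1 hx
        linarith
    _ ≤ 1 := by rw [hε_def]; linarith
  have hCU : closedBall z ε ×ˢ closedBall (0:ℂ) r ⊆ U :=
    (Set.prod_mono hball1 subset_rfl).trans hsub
  have hmemC : ∀ x ∈ ball z ε, ∀ w ∈ ball (0:ℂ) r, (x, w) ∈ U := fun x hx w hw =>
    hCU ⟨ball_subset_closedBall hx, ball_subset_closedBall hw⟩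
  obtain ⟨M, hM⟩ := ((isCompact_closedBall z ε).prod (isCompact_closedBall (0:ℂ) r)).exists_bound_of_continuousOn
    (hH.mono hCU)
  apply continuousAt_of_dominated (bound := fun _ => M)
  · filter_upwards [ball_mem_nhds z hε] with x hx
    exact (slice_contOn hH x (fun w hw => hmemC x hx w hw)).aestronglyMeasurable
      measurableSet_ball
  · filter_upwards [ball_mem_nhds z hε] with x hx
    filter_upwards [ae_restrict_mem measurableSet_ball] with w hw
    exact hM _ ⟨ball_subset_closedBall hx, ball_subset_closedBall hw⟩
  · exact integrable_const M
  · filter_upwards [ae_restrict_mem measurableSet_ball] with w hw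
    have : ContinuousAt H (z, w) :=
      hH.continuousAt (hU.mem_nhds (hmemC z (mem_ball_self hε) w hw))
    have hf : ContinuousAt (fun x : ℂ => (x, w)) z := by fun_prop
    exact ContinuousAt.comp (f := fun x : ℂ => (x, w)) this hf

end Aux

set_option maxHeartbeats 2000000 in
/-- Equations (2.2)–(2.3) of the paper: if `t11, t12, t21, t22 : ℂ² → ℂ` are `C²` on an
open neighborhood `U` of `cl(𝔻) × cl(D(0,r))` and satisfy
`∂²t22/∂z₁∂z̄₁ + ∂²t11/∂z₂∂z̄₂ − ∂²t12/∂z₂∂z̄₁ − ∂²t21/∂z₁∂z̄₂ = 0` on `U`, then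
`a(z₁) = ∫_{D(0,r)} t22(z₁,·) dλ` is `C²` on `𝔻`, and for every `z₁ ∈ 𝔻`,
`∂²a/∂z₁∂z̄₁ = (i/2)[ ∮_{|w|=r} (∂t12/∂z̄₁) dw̄ − ∮_{|w|=r} (∂t21/∂z₁) dw
 + ∮_{|w|=r} (∂t11/∂w) dw ]`. -/
theorem laplacian_of_fiber_area (r : ℝ) (hr0 : 0 < r) (hr1 : r < 1)
    (t11 t12 t21 t22 : ℂ × ℂ → ℂ) (U : Set (ℂ × ℂ)) (hU : IsOpen U)
    (hUsub : closure (Metric.ball (0:ℂ) 1) ×ˢ closure (Metric.ball (0:ℂ) r) ⊆ U)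
    (h11 : ContDiffOn ℝ 2 t11 U) (h12 : ContDiffOn ℝ 2 t12 U)
    (h21 : ContDiffOn ℝ 2 t21 U) (h22 : ContDiffOn ℝ 2 t22 U)
    (hpde : ∀ p ∈ U,
      wirtD1 (fun q => wirtDBar1 t22 q) p + wirtD2 (fun q => wirtDBar2 t11 q) p
        - wirtD2 (fun q => wirtDBar1 t12 q) p - wirtD1 (fun q => wirtDBar2 t21 q) p = 0)
    (a : ℂ → ℂ) (ha : ∀ z₁, a z₁ = ∫ w in Metric.ball (0:ℂ) r, t22 (z₁, w)) :
    ContDiffOn ℝ 2 a (Metric.ball (0:ℂ) 1) ∧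
      ∀ z₁ ∈ Metric.ball (0:ℂ) 1,
        wirtD (fun w => wirtDBar a w) z₁
          = (Complex.I / 2) *
              (contourDwBar r (fun w => wirtDBar1 t12 (z₁, w))
                - contourDw r (fun w => wirtD1 t21 (z₁, w))
                + contourDw r (fun w => wirtD2 t11 (z₁, w))) := by
  have hsub' : closedBall (0:ℂ) 1 ×ˢ closedBall (0:ℂ) r ⊆ U := by
    rwa [closure_ball (0:ℂ) one_ne_zero, closure_ball (0:ℂ) (ne_of_gt hr0)] at hUsub
  have haf : a = fun z => ∫ w in Metric.ball (0:ℂ) r, t22 (z, w) := funext ha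
  have hmemU : ∀ z ∈ Metric.ball (0:ℂ) 1, ∀ w ∈ closedBall (0:ℂ) r, (z, w) ∈ U :=
    fun z hz w hw => hsub' ⟨ball_subset_closedBall hz, hw⟩
  set Br := Metric.ball (0:ℂ) r with hBr
  set G : ℂ × ℂ → (ℂ →L[ℝ] ℂ) :=
    fun q => (fderiv ℝ t22 q).comp (ContinuousLinearMap.inl ℝ ℂ ℂ) with hGdef
  set A : ℂ → (ℂ →L[ℝ] ℂ) := fun z => ∫ w in Br, G (z, w) with hAdef
  have hA : ∀ z ∈ Metric.ball (0:ℂ) 1, HasFDerivAt a (A z) z := by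
    intro z hz
    rw [haf]
    exact dui hr0 hU hsub' t22 (h22.of_le one_le_two) hz
  have hG : ContDiffOn ℝ 1 G U :=
    (h22.fderiv_of_isOpen hU (by norm_num)).clm_comp contDiffOn_const
  set A' : ℂ → (ℂ →L[ℝ] (ℂ →L[ℝ] ℂ)) := fun z =>
    ∫ w in Br, (fderiv ℝ G (z, w)).comp (ContinuousLinearMap.inl ℝ ℂ ℂ) with hA'def
  have hA' : ∀ z ∈ Metric.ball (0:ℂ) 1, HasFDerivAt A (A' z) z := by
    intro z hz
    exact dui hr0 hU hsub' G hG hz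
  have hA'cont : ContinuousOn A' (Metric.ball (0:ℂ) 1) := by
    intro z hz
    exact (cont_param hr0 hU hsub'
      (fun q => (fderiv ℝ G q).comp (ContinuousLinearMap.inl ℝ ℂ ℂ))
      ((hG.continuousOn_fderiv_of_isOpen hU le_rfl).clm_comp continuousOn_const)
      hz).continuousWithinAt
  have hC2 : ContDiffOn ℝ 2 a (Metric.ball (0:ℂ) 1) := by
    rw [show (2 : WithTop ℕ∞) = 1 + 1 by norm_num,
      contDiffOn_succ_iff_fderiv_of_isOpen Metric.isOpen_ball]
    refine ⟨fun z hz => (hA z hz).differentiableAt.differentiableWithinAt, by simp, ?_⟩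
    have hAc1 : ContDiffOn ℝ 1 A (Metric.ball (0:ℂ) 1) := by
      rw [show (1 : WithTop ℕ∞) = 0 + 1 by norm_num,
        contDiffOn_succ_iff_fderiv_of_isOpen Metric.isOpen_ball]
      refine ⟨fun z hz => (hA' z hz).differentiableAt.differentiableWithinAt, by simp, ?_⟩
      rw [contDiffOn_zero]
      exact hA'cont.congr (fun z hz => (hA' z hz).fderiv)
    exact hAc1.congr (fun z hz => (hA z hz).fderiv)
  refine ⟨hC2, ?_⟩
  intro z₁ hz₁
  have hq1 : ∀ w ∈ closedBall (0:ℂ) r, (z₁, w) ∈ U := hmemU z₁ hz₁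
  -- the ∂̄-derivative of a as an integral
  set Φ22 : ℂ × ℂ → ℂ := phi t22 (1, 0) (Complex.I, 0) Complex.I with hΦ22def
  have hGint : ∀ z ∈ Metric.ball (0:ℂ) 1,
      Integrable (fun w => G (z, w)) (volume.restrict Br) := by
    intro z hz
    exact ((slice_contOn hG.continuousOn z (hmemU z hz)).integrableOn_compact
      (isCompact_closedBall (0:ℂ) r)).mono_set ball_subset_closedBall
  have hwbar : ∀ z ∈ Metric.ball (0:ℂ) 1, wirtDBar a z = ∫ w in Br, Φ22 (z, w) := by
    intro z hz
    rw [wirtDBar_of_hasFDerivAt (hA z hz)]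
    have hint := hGint z hz
    have h1 : Integrable (fun w => G (z, w) 1) (volume.restrict Br) :=
      hint.apply_continuousLinearMap 1
    have h2 : Integrable (fun w => Complex.I * G (z, w) Complex.I) (volume.restrict Br) :=
      (hint.apply_continuousLinearMap Complex.I).const_mul Complex.I
    rw [hAdef]
    rw [ContinuousLinearMap.integral_apply hint, ContinuousLinearMap.integral_apply hint,
      ← integral_const_mul Complex.I, ← integral_add h1 h2, ← integral_const_mul]
    apply setIntegral_congr_fun measurableSet_ball
    intro w _
    simp [hGdef, hΦ22def, phi]
  have hev : wirtDBar a =ᶠ[nhds z₁] fun z => ∫ w in Br, Φ22 (z, w) := by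
    filter_upwards [Metric.isOpen_ball.mem_nhds hz₁] with z hz using hwbar z hz
  rw [wirtD_congr_nhds hev]
  have hΦ22c : ContDiffOn ℝ 1 Φ22 U := phi_contDiffOn hU h22 _ _ _
  have hD := dui hr0 hU hsub' Φ22 hΦ22c hz₁
  rw [wirtD_of_hasFDerivAt hD]
  have hΦ'cont : ContinuousOn
      (fun q => (fderiv ℝ Φ22 q).comp (ContinuousLinearMap.inl ℝ ℂ ℂ)) U :=
    (hΦ22c.continuousOn_fderiv_of_isOpen hU le_rfl).clm_comp continuousOn_const
  have hintΦ : Integrable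
      (fun w => (fderiv ℝ Φ22 (z₁, w)).comp (ContinuousLinearMap.inl ℝ ℂ ℂ))
      (volume.restrict Br) :=
    ((slice_contOn hΦ'cont z₁ hq1).integrableOn_compact
      (isCompact_closedBall (0:ℂ) r)).mono_set ball_subset_closedBall
  have h1 : Integrable (fun w => ((fderiv ℝ Φ22 (z₁, w)).comp
      (ContinuousLinearMap.inl ℝ ℂ ℂ)) 1) (volume.restrict Br) :=
    hintΦ.apply_continuousLinearMap 1
  have h2 : Integrable (fun w => Complex.I * ((fderiv ℝ Φ22 (z₁, w)).comp
      (ContinuousLinearMap.inl ℝ ℂ ℂ)) Complex.I) (volume.restrict Br) :=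
    (hintΦ.apply_continuousLinearMap Complex.I).const_mul Complex.I
  rw [ContinuousLinearMap.integral_apply hintΦ, ContinuousLinearMap.integral_apply hintΦ,
    ← integral_const_mul Complex.I, ← integral_sub h1 h2, ← integral_const_mul]
  -- slice data
  set Vz : Set ℂ := {w : ℂ | (z₁, w) ∈ U} with hVzdef
  have hVz : IsOpen Vz := hU.preimage (by fun_prop)
  have hVzsub : closedBall (0:ℂ) r ⊆ Vz := fun w hw => hq1 w hw
  set Φ12 : ℂ × ℂ → ℂ := phi t12 (1, 0) (Complex.I, 0) Complex.I with hΦ12def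
  set Φ21 : ℂ × ℂ → ℂ := phi t21 (1, 0) (Complex.I, 0) (-Complex.I) with hΦ21def
  set Φ11 : ℂ × ℂ → ℂ := phi t11 (0, 1) (0, Complex.I) (-Complex.I) with hΦ11def
  have hΦ12c : ContDiffOn ℝ 1 Φ12 U := phi_contDiffOn hU h12 _ _ _
  have hΦ21c : ContDiffOn ℝ 1 Φ21 U := phi_contDiffOn hU h21 _ _ _
  have hΦ11c : ContDiffOn ℝ 1 Φ11 U := phi_contDiffOn hU h11 _ _ _
  have hslice : ContDiffOn ℝ 1 (fun w : ℂ => (z₁, w)) Vz :=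
    (contDiff_const.prodMk contDiff_id).contDiffOn
  set g12 : ℂ → ℂ := fun w => Φ12 (z₁, w) with hg12def
  set g21 : ℂ → ℂ := fun w => Φ21 (z₁, w) with hg21def
  set g11 : ℂ → ℂ := fun w => Φ11 (z₁, w) with hg11def
  have hg12 : ContDiffOn ℝ 1 g12 Vz := hΦ12c.comp hslice (fun w hw => hw)
  have hg21 : ContDiffOn ℝ 1 g21 Vz := hΦ21c.comp hslice (fun w hw => hw)
  have hg11 : ContDiffOn ℝ 1 g11 Vz := hΦ11c.comp hslice (fun w hw => hw)
  -- pointwise identity on the ball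
  have hpt : ∀ w ∈ Br,
      (1/2 : ℂ) * (((fderiv ℝ Φ22 (z₁, w)).comp (ContinuousLinearMap.inl ℝ ℂ ℂ)) 1
        - Complex.I * ((fderiv ℝ Φ22 (z₁, w)).comp (ContinuousLinearMap.inl ℝ ℂ ℂ)) Complex.I)
      = (1/2 : ℂ) * (fderiv ℝ g12 w 1 - Complex.I * fderiv ℝ g12 w Complex.I)
        + (1/2 : ℂ) * (fderiv ℝ g21 w 1 + Complex.I * fderiv ℝ g21 w Complex.I)
        - (1/2 : ℂ) * (fderiv ℝ g11 w 1 + Complex.I * fderiv ℝ g11 w Complex.I) := by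
    intro w hw
    have hwV : w ∈ Vz := hVzsub (ball_subset_closedBall hw)
    have hq : (z₁, w) ∈ U := hwV
    -- left side equals wirtD1 Φ22
    have e0 : (1/2 : ℂ) * (((fderiv ℝ Φ22 (z₁, w)).comp (ContinuousLinearMap.inl ℝ ℂ ℂ)) 1
        - Complex.I * ((fderiv ℝ Φ22 (z₁, w)).comp
            (ContinuousLinearMap.inl ℝ ℂ ℂ)) Complex.I)
        = wirtD1 Φ22 (z₁, w) := by
      rw [wirtD1_of_hasFDerivAt (diffAt_of_contDiffOn hU hΦ22c hq).hasFDerivAt]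
      simp
    have e1 : wirtD1 Φ22 (z₁, w) = wirtD1 (fun p => wirtDBar1 t22 p) (z₁, w) :=
      wirtD1_congr_on hU
        (fun p hp => (wirtDBar1_eq_phi hU (h22.of_le one_le_two) hp).symm) hq
    have e2 : wirtD1 (fun p => wirtDBar1 t22 p) (z₁, w)
        = wirtD2 (fun p => wirtDBar1 t12 p) (z₁, w)
          + wirtD1 (fun p => wirtDBar2 t21 p) (z₁, w)
          - wirtD2 (fun p => wirtDBar2 t11 p) (z₁, w) := by
      have := hpde (z₁, w) hq
      linear_combination this
    have e3 : wirtD1 (fun p => wirtDBar2 t21 p) (z₁, w)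
        = wirtDBar2 (fun p => wirtD1 t21 p) (z₁, w) := comm1 hU h21 hq
    have e4 : wirtD2 (fun p => wirtDBar2 t11 p) (z₁, w)
        = wirtDBar2 (fun p => wirtD2 t11 p) (z₁, w) := comm2 hU h11 hq
    -- term X
    have eX : wirtD2 (fun p => wirtDBar1 t12 p) (z₁, w)
        = (1/2 : ℂ) * (fderiv ℝ g12 w 1 - Complex.I * fderiv ℝ g12 w Complex.I) := by
      have hx1 : wirtD2 (fun p => wirtDBar1 t12 p) (z₁, w)
          = wirtD (fun w' => wirtDBar1 t12 (z₁, w')) w := rfl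
      have hx2 : (fun w' => wirtDBar1 t12 (z₁, w')) =ᶠ[nhds w] g12 := by
        filter_upwards [hVz.mem_nhds hwV] with w' hw'
        exact wirtDBar1_eq_phi hU (h12.of_le one_le_two) hw'
      rw [hx1, wirtD_congr_nhds hx2,
        wirtD_of_hasFDerivAt ((hg12.differentiableOn one_ne_zero).differentiableAt
          (hVz.mem_nhds hwV)).hasFDerivAt]
    have eY : wirtDBar2 (fun p => wirtD1 t21 p) (z₁, w)
        = (1/2 : ℂ) * (fderiv ℝ g21 w 1 + Complex.I * fderiv ℝ g21 w Complex.I) := by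
      have hx1 : wirtDBar2 (fun p => wirtD1 t21 p) (z₁, w)
          = wirtDBar (fun w' => wirtD1 t21 (z₁, w')) w := rfl
      have hx2 : (fun w' => wirtD1 t21 (z₁, w')) =ᶠ[nhds w] g21 := by
        filter_upwards [hVz.mem_nhds hwV] with w' hw'
        exact wirtD1_eq_phi hU (h21.of_le one_le_two) hw'
      rw [hx1, wirtDBar_congr_nhds hx2,
        wirtDBar_of_hasFDerivAt ((hg21.differentiableOn one_ne_zero).differentiableAt
          (hVz.mem_nhds hwV)).hasFDerivAt]
    have eZ : wirtDBar2 (fun p => wirtD2 t11 p) (z₁, w)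
        = (1/2 : ℂ) * (fderiv ℝ g11 w 1 + Complex.I * fderiv ℝ g11 w Complex.I) := by
      have hx1 : wirtDBar2 (fun p => wirtD2 t11 p) (z₁, w)
          = wirtDBar (fun w' => wirtD2 t11 (z₁, w')) w := rfl
      have hx2 : (fun w' => wirtD2 t11 (z₁, w')) =ᶠ[nhds w] g11 := by
        filter_upwards [hVz.mem_nhds hwV] with w' hw'
        exact wirtD2_eq_phi hU (h11.of_le one_le_two) hw'
      rw [hx1, wirtDBar_congr_nhds hx2,
        wirtDBar_of_hasFDerivAt ((hg11.differentiableOn one_ne_zero).differentiableAt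
          (hVz.mem_nhds hwV)).hasFDerivAt]
    rw [e0, e1, e2, e3, e4, eX, eY, eZ]
  rw [setIntegral_congr_fun measurableSet_ball hpt]
  -- integrability of the three summands
  have hSint : ∀ (gs : ℂ → ℂ), ContDiffOn ℝ 1 gs Vz → ∀ c : ℂ, Integrable
      (fun w => (1/2 : ℂ) * (fderiv ℝ gs w 1 + c * fderiv ℝ gs w Complex.I))
      (volume.restrict Br) := by
    intro gs hgs c
    have hcont : ContinuousOn (fderiv ℝ gs) Vz :=
      hgs.continuousOn_fderiv_of_isOpen hVz le_rfl
    have : ContinuousOn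
        (fun w => (1/2 : ℂ) * (fderiv ℝ gs w 1 + c * fderiv ℝ gs w Complex.I))
        (closedBall (0:ℂ) r) := by
      apply ContinuousOn.mul continuousOn_const
      exact (((hcont.mono hVzsub).clm_apply continuousOn_const).add
        (continuousOn_const.mul ((hcont.mono hVzsub).clm_apply continuousOn_const)))
    exact (this.integrableOn_compact (isCompact_closedBall (0:ℂ) r)).mono_set
      ball_subset_closedBall
  have hX : Integrable (fun w => (1/2 : ℂ) * (fderiv ℝ g12 w 1
      - Complex.I * fderiv ℝ g12 w Complex.I)) (volume.restrict Br) := by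
    have := hSint g12 hg12 (-Complex.I)
    simpa [sub_eq_add_neg, neg_mul] using this
  have hY : Integrable (fun w => (1/2 : ℂ) * (fderiv ℝ g21 w 1
      + Complex.I * fderiv ℝ g21 w Complex.I)) (volume.restrict Br) := hSint g21 hg21 _
  have hZ : Integrable (fun w => (1/2 : ℂ) * (fderiv ℝ g11 w 1
      + Complex.I * fderiv ℝ g11 w Complex.I)) (volume.restrict Br) := hSint g11 hg11 _
  have hXY : Integrable (fun w => (1/2 : ℂ) * (fderiv ℝ g12 w 1
      - Complex.I * fderiv ℝ g12 w Complex.I)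
      + (1/2 : ℂ) * (fderiv ℝ g21 w 1 + Complex.I * fderiv ℝ g21 w Complex.I))
      (volume.restrict Br) := hX.add hY
  rw [integral_sub hXY hZ, integral_add hX hY]
  have hSX := stokes_d hr0 hVz hVzsub hg12
  have hSY := stokes_dbar hr0 hVz hVzsub hg21
  have hSZ := stokes_dbar hr0 hVz hVzsub hg11
  rw [hSX, hSY, hSZ]
  -- convert contour integrals of the φ-slices to the wirtinger forms
  have hcirc : ∀ θ : ℝ, ((r:ℂ) * Complex.exp (Complex.I * (θ:ℂ))) ∈ Vz := by
    intro θ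
    apply hVzsub
    simp only [mem_closedBall, dist_zero_right]
    rw [norm_mul, Complex.norm_exp]
    simp [abs_of_pos hr0, hr0.le]
  have hc12 : contourDwBar r g12
      = contourDwBar r (fun w => wirtDBar1 t12 (z₁, w)) := by
    unfold contourDwBar
    apply intervalIntegral.integral_congr
    intro θ _
    beta_reduce
    congr 1
    exact (wirtDBar1_eq_phi hU (h12.of_le one_le_two) (hcirc θ)).symm
  have hc21 : contourDw r g21 = contourDw r (fun w => wirtD1 t21 (z₁, w)) := by
    unfold contourDw
    apply intervalIntegral.integral_congr
    intro θ _
    beta_reduce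
    congr 1
    exact (wirtD1_eq_phi hU (h21.of_le one_le_two) (hcirc θ)).symm
  have hc11 : contourDw r g11 = contourDw r (fun w => wirtD2 t11 (z₁, w)) := by
    unfold contourDw
    apply intervalIntegral.integral_congr
    intro θ _
    beta_reduce
    congr 1
    exact (wirtD2_eq_phi hU (h11.of_le one_le_two) (hcirc θ)).symm
  rw [hc12, hc21, hc11]
  ring
end
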